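/- arXiv:1206.6963 — 10 statements merged into one kernel-verified Lean document; each statement's English description precedes it below -/
import Mathlib

section
/- If f : [1,∞) → ℝ is locally integrable and there exist constants C > 0 and x₀ ≥ 1 such that u·(log u)·f(u) ≥ −C for almost every u > x₀, then the function s(x) := ∫₁ˣ f(u) du is slowly decreasing with respect to logarithmic summability, i.e., lim_{λ→1⁺} liminf_{x→∞} inf_{x < t ≤ x^λ} (s(t) − s(x)) ≥ 0. -/
open Filter MeasureTheory Set intervalIntegral

/-- `s` is slowly decreasing with respect to logarithmic summability `(L,1)`:
`lim_{λ→1⁺} liminf_{x→∞} inf_{x < t ≤ x^λ} (s t - s x) ≥ 0`. -/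
def SlowlyDecreasingL1 (s : ℝ → ℝ) : Prop :=
  (0 : EReal) ≤ ⨆ l ∈ Set.Ioi (1 : ℝ),
    Filter.liminf (fun x : ℝ =>
      sInf ((fun t : ℝ => ((s t - s x : ℝ) : EReal)) '' Set.Ioc x (x ^ l))) Filter.atTop

set_option maxHeartbeats 1000000 in
theorem stmt2 (f : ℝ → ℝ) (C x₀ : ℝ) (hC : 0 < C) (hx₀ : 1 ≤ x₀)
    (hf : LocallyIntegrableOn f (Ici (1 : ℝ)))
    (hbound : ∀ᵐ u : ℝ, x₀ < u → -C ≤ u * Real.log u * f u) :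
    SlowlyDecreasingL1 (fun x => ∫ u in (1 : ℝ)..x, f u) := by
  unfold SlowlyDecreasingL1
  by_contra h
  push_neg at h
  obtain ⟨c, hc1, hc2⟩ := EReal.exists_between_coe_real h
  set δ : ℝ := min (-c / C) 1 with hδdef
  have hcneg : c < 0 := by exact_mod_cast hc2
  have hδpos : 0 < δ := lt_min (div_pos (by linarith) hC) one_pos
  have hδle : C * δ ≤ -c := by
    have h1 : δ ≤ -c / C := min_le_left _ _
    have h2 : C * δ ≤ C * (-c / C) := mul_le_mul_of_nonneg_left h1 hC.le
    rw [mul_comm C (-c / C), div_mul_cancel₀ _ hC.ne'] at h2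
    linarith
  set l : ℝ := Real.exp δ with hldef
  have hl : 1 < l := by
    rw [hldef]; exact Real.one_lt_exp_iff.mpr hδpos
  have hlogl : Real.log l = δ := Real.log_exp δ
  -- integrability helper
  have hint : ∀ a b : ℝ, 1 ≤ a → a ≤ b → IntervalIntegrable f volume a b := by
    intro a b ha hab
    have hsub : Icc a b ⊆ Ici (1 : ℝ) := fun u hu => le_trans ha hu.1
    have h2 : IntegrableOn f (Icc a b) := hf.integrableOn_compact_subset hsub isCompact_Icc
    have h3 : IntegrableOn f (uIcc a b) := by rwa [uIcc_of_le hab]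
    exact h3.intervalIntegrable
  refine absurd (lt_of_le_of_lt ?_ hc1) (lt_irrefl (c : EReal))
  refine le_iSup₂_of_le l hl ?_
  refine Filter.le_liminf_of_le (by isBoundedDefault) ?_
  filter_upwards [eventually_ge_atTop (max x₀ (Real.exp 1) + 1)] with x hx
  refine le_sInf ?_
  rintro y ⟨t, ht, rfl⟩
  rw [EReal.coe_le_coe_iff]
  obtain ⟨htx, htl⟩ := ht
  have hex : Real.exp 1 < x := by
    have := le_max_right x₀ (Real.exp 1)
    linarith
  have hx0x : x₀ < x := by
    have := le_max_left x₀ (Real.exp 1)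
    linarith
  have h1x : 1 < x := lt_trans (by
    have := Real.add_one_le_exp 1; linarith) hex
  have hxt : x ≤ t := htx.le
  have h1t : 1 < t := lt_trans h1x htx
  have hx0 : (0:ℝ) < x := by linarith
  have ht0 : (0:ℝ) < t := by linarith
  have hlogx : 1 < Real.log x := by
    rw [show (1:ℝ) = Real.log (Real.exp 1) from (Real.log_exp 1).symm]
    exact Real.log_lt_log (Real.exp_pos 1) hex
  have hlogt : 1 < Real.log t := by
    rw [show (1:ℝ) = Real.log (Real.exp 1) from (Real.log_exp 1).symm]
    exact Real.log_lt_log (Real.exp_pos 1) (lt_trans hex htx)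
  -- rewrite difference as one integral
  rw [intervalIntegral.integral_interval_sub_left (hint 1 t le_rfl (by linarith))
    (hint 1 x le_rfl (by linarith))]
  -- the comparison function
  set g : ℝ → ℝ := fun u => -(C / (u * Real.log u)) with hgdef
  have hpos : ∀ u ∈ Icc x t, 0 < u * Real.log u := by
    intro u hu
    have h1u : 1 < u := lt_of_lt_of_le h1x hu.1
    have : 0 < Real.log u := Real.log_pos h1u
    positivity
  have hgcont : ContinuousOn g (Icc x t) := by
    apply ContinuousOn.neg
    apply ContinuousOn.div continuousOn_const
    · exact continuousOn_id.mul (Real.continuousOn_log.mono (fun u hu => by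
        have := hpos u hu
        simp only [mem_compl_iff, mem_singleton_iff]
        intro h0; rw [h0] at this; simp at this))
    · exact fun u hu => ne_of_gt (hpos u hu)
  have hgint : IntervalIntegrable g volume x t :=
    hgcont.intervalIntegrable_of_Icc hxt
  have hfint : IntervalIntegrable f volume x t := hint x t (by linarith) hxt
  have hae : g ≤ᵐ[volume.restrict (Icc x t)] f := by
    refine (ae_restrict_iff' measurableSet_Icc).mpr ?_
    filter_upwards [hbound] with u hu hu2
    have hxu : x₀ < u := lt_of_lt_of_le hx0x hu2.1
    have hb := hu hxu
    have hp := hpos u hu2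
    show -(C / (u * Real.log u)) ≤ f u
    rw [neg_le, le_div_iff₀ hp]
    nlinarith
  have hmono : (∫ u in x..t, g u) ≤ ∫ u in x..t, f u :=
    intervalIntegral.integral_mono_ae_restrict hxt hgint hfint hae
  have hderiv : ∀ u ∈ uIcc x t, HasDerivAt (fun v => -(C * Real.log (Real.log v))) (g u) u := by
    intro u hu
    rw [uIcc_of_le hxt] at hu
    have h1u : 1 < u := lt_of_lt_of_le h1x hu.1
    have hu0 : u ≠ 0 := by positivity
    have hlu : Real.log u ≠ 0 := ne_of_gt (Real.log_pos h1u)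
    have hd1 : HasDerivAt Real.log u⁻¹ u := Real.hasDerivAt_log hu0
    have hd2 : HasDerivAt (fun v => Real.log (Real.log v)) (u⁻¹ / Real.log u) u :=
      hd1.log hlu
    have hd3 : HasDerivAt (fun v => -(C * Real.log (Real.log v))) (-(C * (u⁻¹ / Real.log u))) u :=
      (hd2.const_mul C).neg
    convert hd3 using 1
    show -(C / (u * Real.log u)) = -(C * (u⁻¹ / Real.log u))
    field_simp
  have hcalc : (∫ u in x..t, g u)
      = -(C * Real.log (Real.log t)) - -(C * Real.log (Real.log x)) :=
    intervalIntegral.integral_eq_sub_of_hasDerivAt hderiv hgint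
  have hltlx : Real.log (Real.log t) - Real.log (Real.log x) ≤ δ := by
    have h1 : Real.log t ≤ l * Real.log x := by
      have := Real.log_le_log ht0 htl
      rwa [Real.log_rpow hx0] at this
    have h2 : Real.log (Real.log t) ≤ Real.log (l * Real.log x) :=
      Real.log_le_log (by linarith) h1
    have h3 : Real.log (l * Real.log x) = Real.log l + Real.log (Real.log x) :=
      Real.log_mul (by positivity) (by linarith)
    rw [h3, hlogl] at h2
    linarith
  have hcd : c ≤ ∫ u in x..t, g u := by
    rw [hcalc]
    nlinarith
  linarith
end

section
/- Let s : [1,∞) → ℂ be locally integrable with x₀ > e and λ > 1 such that |s(t) − s(x)| ≤ 1 whenever x₀ ≤ x < t ≤ x^λ. Then there exists a constant B₂ > 0 such that (1/log t)·∫_{x₀}^{t} |s(t) − s(x)|/x dx ≤ B₂ for all t > x₀^λ. -/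
open Filter MeasureTheory Set intervalIntegral

lemma chain_bound (s : ℝ → ℂ) (x₀ lam t : ℝ) (hx₀ : 1 < x₀) (hlam : 1 < lam)
    (h : ∀ x u : ℝ, x₀ ≤ x → x < u → u ≤ x ^ lam → ‖s u - s x‖ ≤ 1) :
    ∀ k : ℕ, ∀ x : ℝ, x₀ ≤ x → x < t → t ≤ x ^ ((lam ^ (k + 1) : ℝ)) →
      ‖s t - s x‖ ≤ k + 1 := by
  intro k
  induction k with
  | zero =>
    intro x hx hxt hle
    rw [pow_one] at hle
    simpa using h x t hx hxt hle
  | succ k ih =>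
    intro x hx hxt hle
    have hx1 : 1 < x := lt_of_lt_of_le hx₀ hx
    by_cases hc : t ≤ x ^ lam
    · have := h x t hx hxt hc
      push_cast
      linarith
    · push_neg at hc
      have hxy : x < x ^ lam := by
        nth_rewrite 1 [← Real.rpow_one x]
        exact (Real.rpow_lt_rpow_left_iff hx1).mpr hlam
      have hy₀ : x₀ ≤ x ^ lam := le_trans hx hxy.le
      have hle' : t ≤ (x ^ lam) ^ (lam ^ (k + 1) : ℝ) := by
        rw [← Real.rpow_mul (by positivity), ← pow_succ']
        exact hle
      have h1 := ih (x ^ lam) hy₀ hc hle'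
      have h2 := h x (x ^ lam) hx hxy le_rfl
      have h3 := norm_sub_le_norm_sub_add_norm_sub (s t) (s (x ^ lam)) (s x)
      push_cast at h1 ⊢
      linarith

lemma pointwise_bound (s : ℝ → ℂ) (x₀ lam t : ℝ) (hx₀ : Real.exp 1 < x₀) (hlam : 1 < lam)
    (h : ∀ x u : ℝ, x₀ ≤ x → x < u → u ≤ x ^ lam → ‖s u - s x‖ ≤ 1)
    (ht : x₀ < t) :
    ∀ x ∈ Icc x₀ t, ‖s t - s x‖ ≤
      1 + (Real.log (Real.log t) - Real.log (Real.log x)) / Real.log lam := by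
  have hL : 0 < Real.log lam := Real.log_pos hlam
  have he1 : (1 : ℝ) < Real.exp 1 := Real.one_lt_exp_iff.mpr one_pos
  have hx1 : 1 < x₀ := he1.trans hx₀
  rintro x ⟨hx, hxt⟩
  have hx1' : 1 < x := lt_of_lt_of_le hx1 hx
  have hxpos : 0 < x := by linarith
  have hlogx : 1 < Real.log x := by
    rw [← Real.log_exp 1]
    exact Real.log_lt_log (Real.exp_pos 1) (lt_of_lt_of_le hx₀ hx)
  have hlogxt : Real.log x ≤ Real.log t := Real.log_le_log hxpos hxt
  have hloglog : Real.log (Real.log x) ≤ Real.log (Real.log t) :=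
    Real.log_le_log (by linarith) hlogxt
  rcases eq_or_lt_of_le hxt with rfl | hxt'
  · simp
  -- x < t
  have hP : ∃ k : ℕ, t ≤ x ^ ((lam ^ (k + 1) : ℝ)) := by
    obtain ⟨n, hn⟩ := pow_unbounded_of_one_lt (Real.log t / Real.log x) hlam
    refine ⟨n, ?_⟩
    have h1 : t = x ^ (Real.log t / Real.log x) := by
      rw [Real.rpow_def_of_pos hxpos]
      rw [mul_div_assoc', mul_comm, mul_div_assoc, div_self (by linarith), mul_one,
        Real.exp_log (by linarith)]
    rw [h1]
    apply Real.rpow_le_rpow_of_exponent_le hx1'.le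
    calc Real.log t / Real.log x ≤ lam ^ n := hn.le
    _ ≤ lam ^ (n + 1) := pow_le_pow_right₀ (by linarith) (Nat.le_succ n)
  classical
  set k := Nat.find hP with hk
  have hspec : t ≤ x ^ ((lam ^ (k + 1) : ℝ)) := Nat.find_spec hP
  have hchain := chain_bound s x₀ lam t hx1 hlam h k x hx hxt' hspec
  have hkb : (k : ℝ) ≤ (Real.log (Real.log t) - Real.log (Real.log x)) / Real.log lam := by
    rcases Nat.eq_zero_or_pos k with h0 | hkpos
    · rw [h0]
      push_cast
      exact div_nonneg (by linarith) hL.le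
    · have hmin : ¬ t ≤ x ^ ((lam ^ ((k - 1) + 1) : ℝ)) := Nat.find_min hP (by omega)
      rw [Nat.sub_add_cancel hkpos] at hmin
      push_neg at hmin
      have hlog : (lam ^ k : ℝ) * Real.log x < Real.log t := by
        have := Real.log_lt_log (Real.rpow_pos_of_pos hxpos _) hmin
        rwa [Real.log_rpow hxpos] at this
      have hlam_pos : (0:ℝ) < lam ^ k := by positivity
      have h2 : (lam ^ k : ℝ) ≤ Real.log t / Real.log x := by
        rw [le_div_iff₀ (by linarith)]
        exact hlog.le
      have h3 : Real.log ((lam:ℝ) ^ k) ≤ Real.log (Real.log t / Real.log x) :=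
        Real.log_le_log hlam_pos h2
      rw [Real.log_pow, Real.log_div (by linarith) (by linarith)] at h3
      rw [le_div_iff₀ hL]
      exact h3
  have : (Real.log (Real.log t) - Real.log (Real.log x)) / Real.log lam ≥ (k:ℝ) := hkb
  push_cast at hchain
  linarith

theorem stmt9 (s : ℝ → ℂ) (x₀ lam : ℝ) (hx₀ : Real.exp 1 < x₀) (hlam : 1 < lam)
    (hs : LocallyIntegrableOn s (Ici (1 : ℝ)))
    (h : ∀ x t : ℝ, x₀ ≤ x → x < t → t ≤ x ^ lam → ‖s t - s x‖ ≤ 1) :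
    ∃ B₂ : ℝ, 0 < B₂ ∧
      ∀ t : ℝ, x₀ ^ lam < t →
        (Real.log t)⁻¹ * ∫ x in x₀..t, ‖s t - s x‖ / x ≤ B₂ := by
  set L := Real.log lam with hLdef
  have hL : 0 < L := Real.log_pos hlam
  have he1 : (1 : ℝ) < Real.exp 1 := Real.one_lt_exp_iff.mpr one_pos
  have hx1 : 1 < x₀ := he1.trans hx₀
  have hx0pos : 0 < x₀ := by linarith
  have hlogx₀ : 1 < Real.log x₀ := by
    rw [← Real.log_exp 1]
    exact Real.log_lt_log (Real.exp_pos 1) hx₀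
  refine ⟨1 + L⁻¹, by positivity, ?_⟩
  intro t ht
  have hxlt : x₀ < x₀ ^ lam := by
    nth_rewrite 1 [← Real.rpow_one x₀]
    exact (Real.rpow_lt_rpow_left_iff hx1).mpr hlam
  have hx₀t : x₀ < t := hxlt.trans ht
  have htpos : 0 < t := hx0pos.trans hx₀t
  have hlogt : Real.log x₀ < Real.log t := Real.log_lt_log hx0pos hx₀t
  have hlt1 : 1 < Real.log t := by linarith
  have hltpos : 0 < Real.log t := by linarith
  set C := Real.log (Real.log t) with hCdef
  have hllx₀ : Real.log (Real.log x₀) ≤ C := Real.log_le_log (by linarith) hlogt.le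
  have hllx₀pos : 0 ≤ Real.log (Real.log x₀) := Real.log_nonneg hlogx₀.le
  set g : ℝ → ℝ := fun x => (1 + (C - Real.log (Real.log x)) / L) / x with hgdef
  set G : ℝ → ℝ := fun x =>
    Real.log x + ((C + 1) * Real.log x - Real.log x * Real.log (Real.log x)) / L with hGdef
  -- derivative
  have hderiv : ∀ x ∈ uIcc x₀ t, HasDerivAt G (g x) x := by
    intro x hx
    rw [uIcc_of_le hx₀t.le] at hx
    obtain ⟨hxl, hxu⟩ := hx
    have hxgt1 : 1 < x := lt_of_lt_of_le hx1 hxl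
    have hxpos : 0 < x := by linarith
    have hlx : 1 < Real.log x := by
      rw [← Real.log_exp 1]
      exact Real.log_lt_log (Real.exp_pos 1) (lt_of_lt_of_le hx₀ hxl)
    have hlxne : Real.log x ≠ 0 := by linarith
    have h1 : HasDerivAt Real.log x⁻¹ x := Real.hasDerivAt_log hxpos.ne'
    have hll : HasDerivAt (fun y => Real.log (Real.log y)) ((Real.log x)⁻¹ * x⁻¹) x :=
      (Real.hasDerivAt_log hlxne).comp x h1
    have hprod := h1.mul hll
    have hG := h1.add (((h1.const_mul (C + 1)).sub hprod).div_const L)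
    convert hG using 1
    · rfl
    · rfl
    · rfl
    have hinv : Real.log x * ((Real.log x)⁻¹ * x⁻¹) = x⁻¹ := by
      field_simp
    rw [hinv, hgdef]
    field_simp
    ring
  -- continuity of g on the interval
  have hgcont : ContinuousOn g (uIcc x₀ t) := by
    rw [uIcc_of_le hx₀t.le]
    have hne : ∀ x ∈ Icc x₀ t, x ≠ 0 := fun x hx => by
      have := hx.1; intro h0; rw [h0] at this; linarith
    have hlne : ∀ x ∈ Icc x₀ t, Real.log x ≠ 0 := fun x hx => by
      have h1 : 1 < Real.log x := by
        rw [← Real.log_exp 1]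
        exact Real.log_lt_log (Real.exp_pos 1) (lt_of_lt_of_le hx₀ hx.1)
      linarith
    have c1 : ContinuousOn Real.log (Icc x₀ t) :=
      Real.continuousOn_log.mono (fun y hy => hne y hy)
    have c2 : ContinuousOn (fun y => Real.log (Real.log y)) (Icc x₀ t) :=
      Real.continuousOn_log.comp c1 (fun y hy => hlne y hy)
    exact (continuousOn_const.add ((continuousOn_const.sub c2).div_const L)).div
      continuousOn_id (fun y hy => hne y hy)
  have hgII : IntervalIntegrable g volume x₀ t := hgcont.intervalIntegrable
  have hFTC : ∫ x in x₀..t, g x = G t - G x₀ :=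
    intervalIntegral.integral_eq_sub_of_hasDerivAt hderiv hgII
  -- integrability of f
  set f : ℝ → ℝ := fun x => ‖s t - s x‖ / x with hfdef
  have hsInt : IntegrableOn s (Icc x₀ t) :=
    hs.integrableOn_compact_subset (fun y hy => le_trans hx1.le hy.1) isCompact_Icc
  have hsub : IntegrableOn (fun x => s t - s x) (Icc x₀ t) :=
    (integrableOn_const measure_Icc_lt_top.ne).sub hsInt
  have hnorm : IntegrableOn (fun x => ‖s t - s x‖) (Icc x₀ t) := hsub.norm
  have hbound : IntegrableOn (fun x => ‖s t - s x‖ / x₀) (Icc x₀ t) := hnorm.div_const x₀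
  have hmeas : AEStronglyMeasurable f (volume.restrict (Icc x₀ t)) := by
    have : f = fun x => ‖s t - s x‖ * x⁻¹ := by
      funext x; simp [hfdef, div_eq_mul_inv]
    rw [this]
    exact hnorm.aestronglyMeasurable.mul (measurable_id.inv).aestronglyMeasurable
  have hfint : IntegrableOn f (Icc x₀ t) := by
    refine hbound.mono' hmeas ?_
    refine (ae_restrict_iff' measurableSet_Icc).mpr (Filter.Eventually.of_forall ?_)
    intro x hx
    have hxpos : 0 < x := lt_of_lt_of_le hx0pos hx.1
    rw [Real.norm_eq_abs, abs_of_nonneg (by positivity)]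
    exact div_le_div_of_nonneg_left (by positivity) hx0pos hx.1
  have hfII : IntervalIntegrable f volume x₀ t :=
    (intervalIntegrable_iff_integrableOn_Icc_of_le hx₀t.le).mpr hfint
  -- pointwise comparison
  have hcomp : ∀ x ∈ Icc x₀ t, f x ≤ g x := by
    intro x hx
    have hxpos : 0 < x := lt_of_lt_of_le hx0pos hx.1
    have hpb := pointwise_bound s x₀ lam t hx₀ hlam h hx₀t x hx
    exact div_le_div_of_nonneg_right hpb hxpos.le
  have hmono : ∫ x in x₀..t, f x ≤ ∫ x in x₀..t, g x :=
    intervalIntegral.integral_mono_on hx₀t.le hfII hgII hcomp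
  -- bound on G t - G x₀
  have hGbound : G t - G x₀ ≤ Real.log t * (1 + L⁻¹) := by
    have hLne : L ≠ 0 := hL.ne'
    have e1 : G t - G x₀ = (L * (Real.log t - Real.log x₀) + ((C + 1) * Real.log t - Real.log t * C)
        - ((C + 1) * Real.log x₀ - Real.log x₀ * Real.log (Real.log x₀))) / L := by
      simp only [hGdef]
      field_simp
      ring
    have e2 : Real.log t * (1 + L⁻¹) = (Real.log t * L + Real.log t) / L := by
      field_simp
    rw [e1, e2]
    refine div_le_div_of_nonneg_right ?_ hL.le
    nlinarith [mul_nonneg (by linarith : (0:ℝ) ≤ Real.log x₀)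
        (sub_nonneg.mpr hllx₀), mul_pos (by linarith : (0:ℝ) < Real.log x₀) hL]
  calc (Real.log t)⁻¹ * ∫ x in x₀..t, f x ≤ (Real.log t)⁻¹ * (Real.log t * (1 + L⁻¹)) := by
        apply mul_le_mul_of_nonneg_left _ (by positivity)
        rw [hFTC] at hmono
        exact hmono.trans hGbound
  _ = 1 + L⁻¹ := by field_simp
end

section
/- If a measurable function s : [1,∞) → ℝ is slowly decreasing with respect to logarithmic summability and the statistical limit st-lim_{x→∞} s(x) = ℓ exists, then the ordinary limit lim_{x→∞} s(x) = ℓ exists. -/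
open Filter MeasureTheory Set

/-- Statistical limit of a real-valued measurable function at `∞`. -/
def StatLimR (s : ℝ → ℝ) (ℓ : ℝ) : Prop :=
  ∀ ε : ℝ, 0 < ε →
    Tendsto (fun b : ℝ =>
        (volume {x : ℝ | x ∈ Ioo (1 : ℝ) b ∧ ε < |s x - ℓ|}).toReal / (b - 1))
      atTop (nhds 0)

lemma aux_key (s : ℝ → ℝ) (hsd : SlowlyDecreasingL1 s) (δ : ℝ) (hδ : 0 < δ) :
    ∃ l : ℝ, 1 < l ∧ ∀ᶠ x in atTop, ∀ t ∈ Ioc x (x ^ l), s x - δ < s t := by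
  have h0 : ((-δ : ℝ) : EReal) < (0 : EReal) := by
    rw [← EReal.coe_zero, EReal.coe_lt_coe_iff]; linarith
  have h2 := lt_of_lt_of_le h0 hsd
  rw [lt_iSup_iff] at h2
  obtain ⟨l, hl⟩ := h2
  rw [lt_iSup_iff] at hl
  obtain ⟨hl1, hl2⟩ := hl
  refine ⟨l, hl1, ?_⟩
  have hev := eventually_lt_of_lt_liminf hl2
  filter_upwards [hev] with x hx t ht
  have hle : sInf ((fun t : ℝ => ((s t - s x : ℝ) : EReal)) '' Set.Ioc x (x ^ l))
      ≤ ((s t - s x : ℝ) : EReal) := sInf_le (mem_image_of_mem _ ht)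
  have := lt_of_lt_of_le hx hle
  rw [EReal.coe_lt_coe_iff] at this
  linarith

lemma aux_dens (s : ℝ → ℝ) (ℓ δ a b : ℝ) (h1 : 1 ≤ a) (hab : a < b)
    (hsub : ∀ y ∈ Ioo a b, δ < |s y - ℓ|) :
    (b - a) / (b - 1) ≤
      (volume {x : ℝ | x ∈ Ioo (1 : ℝ) b ∧ δ < |s x - ℓ|}).toReal / (b - 1) := by
  set S : Set ℝ := {x : ℝ | x ∈ Ioo (1 : ℝ) b ∧ δ < |s x - ℓ|} with hS
  have hsub2 : Ioo a b ⊆ S := by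
    intro y hy
    exact ⟨⟨lt_of_le_of_lt h1 hy.1, hy.2⟩, hsub y hy⟩
  have hle : volume (Ioo a b) ≤ volume S := measure_mono hsub2
  have hfin : volume S ≤ ENNReal.ofReal (b - 1) := by
    calc volume S ≤ volume (Ioo (1 : ℝ) b) := measure_mono (fun y hy => hy.1)
    _ = ENNReal.ofReal (b - 1) := by rw [Real.volume_Ioo]
  have hne : volume S ≠ ⊤ := ne_top_of_le_ne_top ENNReal.ofReal_ne_top hfin
  have h3 : b - a ≤ (volume S).toReal := by
    have := ENNReal.toReal_mono hne hle
    rwa [Real.volume_Ioo, ENNReal.toReal_ofReal (by linarith)] at this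
  exact div_le_div_of_nonneg_right h3 (by linarith) |>.trans_eq rfl |>.trans_eq rfl

theorem stmt10 (s : ℝ → ℝ) (ℓ : ℝ) (hs : Measurable s)
    (hsd : SlowlyDecreasingL1 s) (hst : StatLimR s ℓ) :
    Tendsto s atTop (nhds ℓ) := by
  rw [Metric.tendsto_nhds]
  intro ε hε
  set δ := ε / 4 with hδdef
  have hδ : 0 < δ := by positivity
  obtain ⟨l, hl1, hX⟩ := aux_key s hsd δ hδ
  have hl0 : (0 : ℝ) < l := by linarith
  -- density eventually below 1/2
  have hd : ∀ᶠ b in atTop,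
      (volume {x : ℝ | x ∈ Ioo (1 : ℝ) b ∧ δ < |s x - ℓ|}).toReal / (b - 1) < 1/2 :=
    (hst δ hδ).eventually_lt_const (by norm_num)
  obtain ⟨B, hB⟩ := eventually_atTop.mp hd
  obtain ⟨X₀, hX₀⟩ := eventually_atTop.mp hX
  -- x ^ (l - 1) → ∞  and  x ^ (1 - 1/l) → ∞ and x ^ (1/l) → ∞
  have t1 := tendsto_rpow_atTop (y := l - 1) (by linarith)
  have t2 := tendsto_rpow_atTop (y := 1 - 1/l) (by
    rw [sub_pos, div_lt_one hl0]; exact hl1)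
  have t3 := tendsto_rpow_atTop (y := 1/l) (by positivity)
  -- Upper bound: eventually s x < ℓ + 2δ
  have hup : ∀ᶠ x in atTop, s x < ℓ + 2*δ := by
    by_contra hcon
    rw [Filter.not_eventually] at hcon
    have hev : ∀ᶠ x : ℝ in atTop,
        X₀ ≤ x ∧ (2:ℝ) ≤ x ^ (l-1) ∧ B ≤ x ∧ (1:ℝ) < x := by
      filter_upwards [eventually_ge_atTop X₀, t1.eventually_ge_atTop 2,
        eventually_ge_atTop B, eventually_gt_atTop 1] with x h1 h2 h3 h4
      exact ⟨h1, h2, h3, h4⟩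
    obtain ⟨x, hx, hx0, hx2, hxB, hx1⟩ := (hcon.and_eventually hev).exists
    push_neg at hx
    have hxpos : (0:ℝ) < x := by linarith
    -- x^l ≥ 2x
    have hxl : x * x ^ (l - 1) = x ^ l := by
      have h := Real.rpow_add hxpos 1 (l - 1)
      rw [Real.rpow_one] at h
      rw [show l = 1 + (l-1) by ring, h]; ring_nf
    have h2x : 2 * x ≤ x ^ l := by
      calc 2 * x ≤ x ^ (l-1) * x := by nlinarith
      _ = x ^ l := by rw [mul_comm]; exact hxl
    have hxlt : x < x ^ l := by nlinarith
    have hsubs : ∀ y ∈ Ioo x (x ^ l), δ < |s y - ℓ| := by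
      intro y hy
      have := hX₀ x hx0 y ⟨hy.1, le_of_lt hy.2⟩
      have : ℓ + δ < s y := by linarith
      rw [abs_sub_comm, abs_of_neg (by linarith)]
      linarith
    have hdens := aux_dens s ℓ δ x (x ^ l) (le_of_lt hx1) hxlt hsubs
    have hBxl : B ≤ x ^ l := le_trans hxB (by linarith)
    have hlt := hB (x ^ l) hBxl
    have hhalf : (1:ℝ)/2 ≤ (x ^ l - x) / (x ^ l - 1) := by
      rw [le_div_iff₀ (by linarith)]
      linarith
    linarith
  -- Lower bound: eventually ℓ - 2δ < s x
  have hlow : ∀ᶠ x in atTop, ℓ - 2*δ < s x := by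
    by_contra hcon
    rw [Filter.not_eventually] at hcon
    have hev : ∀ᶠ x : ℝ in atTop,
        X₀ ≤ x ^ (1/l) ∧ (2:ℝ) ≤ x ^ (1 - 1/l) ∧ B ≤ x ∧ (1:ℝ) < x := by
      filter_upwards [t3.eventually_ge_atTop X₀, t2.eventually_ge_atTop 2,
        eventually_ge_atTop B, eventually_gt_atTop 1] with x h1 h2 h3 h4
      exact ⟨h1, h2, h3, h4⟩
    obtain ⟨x, hx, hx0, hx2, hxB, hx1⟩ := (hcon.and_eventually hev).exists
    push_neg at hx
    have hxpos : (0:ℝ) < x := by linarith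
    have hrpos : (0:ℝ) < x ^ (1/l) := Real.rpow_pos_of_pos hxpos _
    have hsplit : x ^ (1/l) * x ^ (1 - 1/l) = x := by
      rw [← Real.rpow_add hxpos, add_sub_cancel, Real.rpow_one]
    have hroot : (x ^ (1/l)) ^ l = x := by
      rw [← Real.rpow_mul (le_of_lt hxpos), one_div_mul_cancel (by linarith : l ≠ 0),
        Real.rpow_one]
    have hlt : x ^ (1/l) < x := by nlinarith
    have h1a : (1:ℝ) ≤ x ^ (1/l) :=
      Real.one_le_rpow (le_of_lt hx1) (by positivity)
    have hsubs : ∀ y ∈ Ioo (x ^ (1/l)) x, δ < |s y - ℓ| := by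
      intro y hy
      have hyX : X₀ ≤ y := le_trans hx0 (le_of_lt hy.1)
      have hxy : x ≤ y ^ l := by
        have := Real.rpow_lt_rpow (le_of_lt hrpos) hy.1 hl0
        rw [hroot] at this
        exact le_of_lt this
      have := hX₀ y hyX x ⟨hy.2, hxy⟩
      have hylt : s y < ℓ - δ := by linarith
      rw [abs_of_neg (by linarith)]
      linarith
    have hdens := aux_dens s ℓ δ (x ^ (1/l)) x h1a hlt hsubs
    have hltd := hB x hxB
    have hhalf : (1:ℝ)/2 ≤ (x - x ^ (1/l)) / (x - 1) := by
      rw [le_div_iff₀ (by linarith)]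
      nlinarith
    linarith
  filter_upwards [hup, hlow] with x h1 h2
  rw [Real.dist_eq, abs_lt]
  constructor <;> [skip; skip] <;> rw [hδdef] at h1 h2 <;> linarith
end

section
/- If a measurable function s : [1,∞) → ℂ is slowly oscillating with respect to logarithmic summability and the statistical limit st-lim_{x→∞} s(x) = ℓ exists, then the ordinary limit lim_{x→∞} s(x) = ℓ exists. -/
open Filter MeasureTheory Set

/-- `s` is slowly oscillating with respect to logarithmic summability `(L,1)`. -/
def SlowlyOscillatingL1 (s : ℝ → ℂ) : Prop :=
  (⨅ l ∈ Set.Ioi (1 : ℝ),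
    Filter.limsup (fun x : ℝ =>
      sSup ((fun t : ℝ => ((‖s t - s x‖ : ℝ) : EReal)) '' Set.Ioc x (x ^ l)))
      Filter.atTop) = 0

/-- Statistical limit of a complex-valued measurable function at `∞`. -/
def StatLimC (s : ℝ → ℂ) (ℓ : ℂ) : Prop :=
  ∀ ε : ℝ, 0 < ε →
    Tendsto (fun b : ℝ =>
        (volume {x : ℝ | x ∈ Ioo (1 : ℝ) b ∧ ε < ‖s x - ℓ‖}).toReal / (b - 1))
      atTop (nhds 0)

theorem stmt11 (s : ℝ → ℂ) (ℓ : ℂ) (hs : Measurable s)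
    (hso : SlowlyOscillatingL1 s) (hst : StatLimC s ℓ) :
    Tendsto s atTop (nhds ℓ) := by
  rw [Metric.tendsto_nhds]
  intro ε hε
  have hδ : (0 : ℝ) < ε / 2 := by positivity
  -- find l > 1 with small limsup of oscillation
  have h0 : (⨅ l ∈ Set.Ioi (1 : ℝ),
      Filter.limsup (fun x : ℝ =>
        sSup ((fun t : ℝ => ((‖s t - s x‖ : ℝ) : EReal)) '' Set.Ioc x (x ^ l)))
        Filter.atTop) < ((ε / 2 : ℝ) : EReal) := by
    rw [hso]
    exact_mod_cast EReal.coe_pos.mpr hδ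
  rw [iInf_lt_iff] at h0
  obtain ⟨l, h0⟩ := h0
  rw [iInf_lt_iff] at h0
  obtain ⟨hl, hLl⟩ := h0
  rw [Set.mem_Ioi] at hl
  have hev1 := Filter.eventually_lt_of_limsup_lt hLl
  -- statistical limit gives eventual smallness of the bad ratio
  have hst' := hst (ε / 2) hδ
  have hhalf : ∀ᶠ b : ℝ in atTop,
      (volume {x : ℝ | x ∈ Ioo (1 : ℝ) b ∧ ε / 2 < ‖s x - ℓ‖}).toReal / (b - 1)
        < 1 / 2 :=
    hst'.eventually_lt_const (by norm_num)
  have hcomp : Tendsto (fun x : ℝ => x ^ l) atTop atTop :=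
    tendsto_rpow_atTop (by linarith)
  have hev2 := hcomp.eventually hhalf
  have hev3 : ∀ᶠ x : ℝ in atTop, (2 : ℝ) ≤ x ^ (l - 1) :=
    (tendsto_rpow_atTop (by linarith)).eventually_ge_atTop 2
  filter_upwards [hev1, hev2, hev3, eventually_ge_atTop (2 : ℝ)] with x hx1 hx2 hx3 hx4
  have hx0 : (0 : ℝ) < x := by linarith
  have hbx : 2 * x ≤ x ^ l := by
    have : x ^ l = x ^ (l - 1) * x := by
      rw [← Real.rpow_add_one (ne_of_gt hx0) (l - 1)]
      norm_num
    nlinarith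
  -- find a good point t in (x, x^l]
  have hgood : ∃ t ∈ Set.Ioc x (x ^ l), ‖s t - ℓ‖ ≤ ε / 2 := by
    by_contra hbad
    push_neg at hbad
    have hsub : Set.Ioo x (x ^ l) ⊆
        {t : ℝ | t ∈ Ioo (1 : ℝ) (x ^ l) ∧ ε / 2 < ‖s t - ℓ‖} := by
      intro t ht
      refine ⟨⟨by linarith [ht.1], ht.2⟩, (hbad t ⟨ht.1, le_of_lt ht.2⟩)⟩
    have hfin : volume {t : ℝ | t ∈ Ioo (1 : ℝ) (x ^ l) ∧ ε / 2 < ‖s t - ℓ‖}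
        < ⊤ := by
      refine lt_of_le_of_lt (measure_mono ?_) (measure_Ioo_lt_top (a := (1:ℝ)) (b := x ^ l))
      exact fun t ht => ht.1
    have hle : x ^ l - x ≤
        (volume {t : ℝ | t ∈ Ioo (1 : ℝ) (x ^ l) ∧ ε / 2 < ‖s t - ℓ‖}).toReal := by
      have h1 : volume (Set.Ioo x (x ^ l)) ≤
          volume {t : ℝ | t ∈ Ioo (1 : ℝ) (x ^ l) ∧ ε / 2 < ‖s t - ℓ‖} :=
        measure_mono hsub
      have h2 := ENNReal.toReal_mono hfin.ne h1
      rwa [Real.volume_Ioo, ENNReal.toReal_ofReal (by linarith)] at h2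
    have hpos : (0 : ℝ) < x ^ l - 1 := by linarith
    rw [div_lt_iff₀ hpos] at hx2
    linarith
  obtain ⟨t, ht, hgood⟩ := hgood
  -- oscillation bound
  have hosc : ‖s t - s x‖ < ε / 2 := by
    have hmem : ((‖s t - s x‖ : ℝ) : EReal) ∈
        (fun t : ℝ => ((‖s t - s x‖ : ℝ) : EReal)) '' Set.Ioc x (x ^ l) :=
      Set.mem_image_of_mem _ ht
    have := lt_of_le_of_lt (le_sSup hmem) hx1
    exact_mod_cast this
  have : ‖s x - ℓ‖ < ε := by
    calc ‖s x - ℓ‖ ≤ ‖s x - s t‖ + ‖s t - ℓ‖ := by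
          simpa using norm_add_le (s x - s t) (s t - ℓ)
      _ = ‖s t - s x‖ + ‖s t - ℓ‖ := by
          rw [norm_sub_rev]
      _ < ε / 2 + ε / 2 := by linarith
      _ = ε := by ring
  simpa [Complex.dist_eq] using this
end

section
/- If s : [1,∞) → ℝ is locally integrable and slowly decreasing with respect to logarithmic summability, then its logarithmic mean τ(t) := (1/log t)·∫₁ᵗ s(x)/x dx is also slowly decreasing with respect to logarithmic summability. -/
open Filter MeasureTheory Set intervalIntegral

noncomputable def Tau (s : ℝ → ℝ) (t : ℝ) : ℝ := (Real.log t)⁻¹ * ∫ x in (1:ℝ)..t, s x / x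


lemma ii {s : ℝ → ℝ} (hs : LocallyIntegrableOn s (Ici (1 : ℝ)))
    {p q : ℝ} (hp : 1 ≤ p) (hpq : p ≤ q) :
    IntervalIntegrable (fun u => s u / u) volume p q := by
  rw [intervalIntegrable_iff_integrableOn_Icc_of_le hpq]
  have h1 : IntegrableOn s (Icc p q) volume :=
    hs.integrableOn_compact_subset (fun y hy => le_trans hp hy.1) isCompact_Icc
  have h2 : ContinuousOn (fun u : ℝ => u⁻¹) (Icc p q) := by
    apply ContinuousOn.inv₀ continuousOn_id
    intro y hy
    exact ne_of_gt (lt_of_lt_of_le one_pos (le_trans hp hy.1))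
  simpa [div_eq_mul_inv] using h1.mul_continuousOn h2 isCompact_Icc

lemma Tbound {s : ℝ → ℝ} (hs : LocallyIntegrableOn s (Ici (1 : ℝ)))
    {X B y : ℝ} (hX : 1 < X) (hXy : X ≤ y) (hyB : y ≤ B) :
    |Tau s y| ≤ (∫ u in (1:ℝ)..B, |s u / u|) / Real.log X := by
  have h1y : (1:ℝ) ≤ y := le_trans hX.le hXy
  have h1B : (1:ℝ) ≤ B := le_trans h1y hyB
  have hly : 0 < Real.log y := Real.log_pos (lt_of_lt_of_le hX hXy)
  have hlX : 0 < Real.log X := Real.log_pos hX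
  have habs : |∫ u in (1:ℝ)..y, s u / u| ≤ ∫ u in (1:ℝ)..B, |s u / u| := by
    refine le_trans (abs_integral_le_integral_abs h1y) ?_
    have hadd := integral_add_adjacent_intervals ((ii hs le_rfl h1y).abs)
      ((ii hs h1y hyB).abs)
    have hnn : 0 ≤ ∫ u in y..B, |s u / u| :=
      integral_nonneg hyB (fun u _ => abs_nonneg _)
    linarith [hadd]
  rw [Tau, abs_mul, abs_inv, abs_of_pos hly]
  rw [div_eq_inv_mul]
  have hCnn : 0 ≤ ∫ u in (1:ℝ)..B, |s u / u| :=
    integral_nonneg h1B (fun u _ => abs_nonneg _)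
  refine mul_le_mul ?_ habs (abs_nonneg _) (by positivity)
  exact inv_anti₀ hlX (Real.log_le_log (by positivity) hXy)


lemma alg1 (a Lx p q : ℝ) (ha : a ≠ 0) (h1a : 1 - a ≠ 0) (hLx : Lx ≠ 0) :
    q / ((1-a) * Lx) - Lx⁻¹ * (p + q) = (a / (1-a)) * (Lx⁻¹ * (p + q) - (a * Lx)⁻¹ * p) := by
  field_simp
  ring

lemma alg2 (Lt Lx P R : ℝ) (hLt : Lt ≠ 0) (hLx : Lx ≠ 0) (hd : Lt - Lx ≠ 0) :
    Lt⁻¹ * (P + R) - Lx⁻¹ * P = ((Lt - Lx)/Lt) * (R / (Lt - Lx) - Lx⁻¹ * P) := by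
  field_simp
  ring

lemma algcoef (lam L : ℝ) (hlam : lam ≠ 0) (hL : L ≠ 0) (hd : L - lam ≠ 0) :
    (lam-1)/lam * ((lam/L) / (1 - lam/L)) = (lam - 1)/(L - lam) := by
  have h1 : 1 - lam/L = (L - lam)/L := by field_simp
  rw [h1, div_div_div_eq, div_mul_div_comm]
  rw [div_eq_div_iff (by exact mul_ne_zero hlam (mul_ne_zero hL hd)) hd]
  ring

set_option maxHeartbeats 1000000 in
lemma chain {s : ℝ → ℝ} (hs : LocallyIntegrableOn s (Ici (1 : ℝ)))
    {L lam X₁ K x t e : ℝ}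
    (hL : 1 < L) (hlam : 1 < lam) (hlamL : lam < L) (he : 0 < e) (hK : 0 ≤ K)
    (hX₁ : 1 < X₁) (hx1 : 1 < x)
    (hslow : ∀ v, X₁ ≤ v → ∀ u ∈ Ioc v (v ^ L), s v - e ≤ s u)
    (hx' : X₁ ≤ x ^ (lam / L))
    (hTK : -K ≤ Tau s x - Tau s (x ^ (lam / L)))
    (ht : t ∈ Ioc x (x ^ lam)) :
    -e - (lam - 1)/(L - lam) * K ≤ Tau s t - Tau s x := by
  have hL0 : (0:ℝ) < L := lt_trans one_pos hL
  have hx0 : (0:ℝ) < x := lt_trans one_pos hx1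
  set a : ℝ := lam / L with ha_def
  have ha0 : 0 < a := div_pos (lt_trans one_pos hlam) hL0
  have ha1 : a < 1 := (div_lt_one hL0).2 hlamL
  set x' : ℝ := x ^ a with hx'_def
  have hx'1 : 1 < x' := Real.one_lt_rpow_iff_of_pos hx0 |>.2 (Or.inl ⟨hx1, ha0⟩)
  have hx'x : x' < x := by
    have := (Real.rpow_lt_rpow_left_iff hx1).2 ha1
    rwa [Real.rpow_one] at this
  have hxt : x < t := ht.1
  have htxl : t ≤ x ^ lam := ht.2
  -- logs
  have hLx : 0 < Real.log x := Real.log_pos hx1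
  have hLx' : Real.log x' = a * Real.log x := Real.log_rpow hx0 a
  have hLxt : Real.log x < Real.log t := Real.log_lt_log hx0 hxt
  have hLtlam : Real.log t ≤ lam * Real.log x := by
    have := Real.log_le_log (lt_trans hx0 hxt) htxl
    rwa [Real.log_rpow hx0] at this
  have hLt0 : 0 < Real.log t := lt_trans hLx hLxt
  -- integrals
  set p : ℝ := ∫ u in (1:ℝ)..x', s u / u with hp_def
  set q : ℝ := ∫ u in x'..x, s u / u with hq_def
  set r : ℝ := ∫ u in x..t, s u / u with hr_def
  have hpq : p + q = ∫ u in (1:ℝ)..x, s u / u :=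
    integral_add_adjacent_intervals (ii hs le_rfl hx'1.le) (ii hs hx'1.le hx'x.le)
  have hpqr : (p + q) + r = ∫ u in (1:ℝ)..t, s u / u := by
    rw [hpq]
    exact integral_add_adjacent_intervals (ii hs le_rfl (lt_trans hx'1 hx'x).le)
      (ii hs hx1.le hxt.le)
  -- pointwise bound on (x,t]
  have hkey : ∀ u ∈ Icc x t, q ≤ (s u + e) * (Real.log x - Real.log x') := by
    intro u hu
    have huv : ∀ v ∈ Icc x' x, s v ≤ s u + e := by
      intro v hv
      have hvX : X₁ ≤ v := le_trans hx' hv.1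
      rcases eq_or_lt_of_le (le_trans hv.2 hu.1) with h | h
      · rw [← h]; linarith
      · have huvL : u ≤ v ^ L := by
          have h1 : x ^ lam ≤ v ^ L := by
            have : (x ^ a) ^ L ≤ v ^ L :=
              Real.rpow_le_rpow (Real.rpow_nonneg hx0.le a) hv.1 hL0.le
            rwa [← Real.rpow_mul hx0.le, ha_def, div_mul_cancel₀] at this
            exact ne_of_gt hL0
          exact le_trans (le_trans hu.2 htxl) h1
        have := hslow v hvX u ⟨h, huvL⟩
        linarith
    -- integrate over v
    have hmono : ∫ v in x'..x, s v / v ≤ ∫ v in x'..x, (s u + e) * v⁻¹ := by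
      apply integral_mono_on hx'x.le (ii hs hx'1.le hx'x.le)
      · apply ContinuousOn.intervalIntegrable
        rw [uIcc_of_le hx'x.le]
        apply ContinuousOn.mul continuousOn_const
        apply ContinuousOn.inv₀ continuousOn_id
        intro y hy
        exact ne_of_gt (lt_trans one_pos (lt_of_lt_of_le hx'1 hy.1))
      · intro v hv
        rw [div_eq_mul_inv]
        have hv0 : (0:ℝ) < v := lt_trans one_pos (lt_of_lt_of_le hx'1 hv.1)
        exact mul_le_mul_of_nonneg_right (huv v hv) (inv_nonneg.2 hv0.le)
    have hcalc : ∫ v in x'..x, (s u + e) * v⁻¹ = (s u + e) * (Real.log x - Real.log x') := by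
      rw [intervalIntegral.integral_const_mul, integral_inv_of_pos (lt_trans one_pos hx'1) hx0,
        Real.log_div (ne_of_gt hx0) (ne_of_gt (lt_trans one_pos hx'1))]
    rw [← hcalc]; exact hmono
  -- lower bound for r
  have hLxx' : 0 < Real.log x - Real.log x' := by
    rw [hLx']; nlinarith
  have hrlow : (q / (Real.log x - Real.log x') - e) * (Real.log t - Real.log x) ≤ r := by
    have hmono : ∫ u in x..t, (q / (Real.log x - Real.log x') - e) * u⁻¹ ≤ ∫ u in x..t, s u / u := by
      apply integral_mono_on hxt.le
      · apply ContinuousOn.intervalIntegrable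
        rw [uIcc_of_le hxt.le]
        apply ContinuousOn.mul continuousOn_const
        apply ContinuousOn.inv₀ continuousOn_id
        intro y hy
        exact ne_of_gt (lt_trans one_pos (lt_of_lt_of_le hx1 hy.1))
      · exact ii hs hx1.le hxt.le
      · intro u hu
        have hu0 : (0:ℝ) < u := lt_trans one_pos (lt_of_lt_of_le hx1 hu.1)
        have h1 : q / (Real.log x - Real.log x') - e ≤ s u := by
          have := hkey u hu
          rw [div_sub' (ne_of_gt hLxx'), div_le_iff₀ hLxx']
          nlinarith
        rw [div_eq_mul_inv]
        exact mul_le_mul_of_nonneg_right h1 (inv_nonneg.2 hu0.le)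
    have hcalc : ∫ u in x..t, (q / (Real.log x - Real.log x') - e) * u⁻¹
        = (q / (Real.log x - Real.log x') - e) * (Real.log t - Real.log x) := by
      rw [intervalIntegral.integral_const_mul, integral_inv_of_pos hx0 (lt_trans hx0 hxt),
        Real.log_div (ne_of_gt (lt_trans hx0 hxt)) (ne_of_gt hx0)]
    rw [← hcalc]; exact hmono
  -- algebra
  have hTt : Tau s t = (Real.log t)⁻¹ * ((p + q) + r) := by rw [Tau, hpqr]
  have hTx : Tau s x = (Real.log x)⁻¹ * (p + q) := by rw [Tau, hpq]
  have hTx' : Tau s x' = (a * Real.log x)⁻¹ * p := by rw [Tau, ← hLx', hp_def]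
  rw [hTt, hTx]
  rw [hTx, hTx'] at hTK
  set Lx := Real.log x
  set Lt := Real.log t
  have hLxne : Lx ≠ 0 := ne_of_gt hLx
  have hLtne : Lt ≠ 0 := ne_of_gt hLt0
  have hane : a ≠ 0 := ne_of_gt ha0
  have h1ane : 1 - a ≠ 0 := by intro h; nlinarith
  have hLtLxne : Lt - Lx ≠ 0 := ne_of_gt (by linarith)
  -- A - Tx = (a/(1-a)) (Tx - Tx')
  have halg1 : q / ((1-a) * Lx) - Lx⁻¹ * (p + q)
      = (a / (1-a)) * (Lx⁻¹ * (p + q) - (a * Lx)⁻¹ * p) := alg1 a Lx p q hane h1ane hLxne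
  have hLxsub : Lx - Real.log x' = (1-a) * Lx := by rw [hLx']; ring
  have h3 : q / ((1-a) * Lx) - e ≤ r / (Lt - Lx) := by
    rw [le_div_iff₀ (by linarith : (0:ℝ) < Lt - Lx)]
    rw [hLxsub] at hrlow
    linarith
  have h4 : -e - (a/(1-a)) * K ≤ r / (Lt - Lx) - Lx⁻¹ * (p + q) := by
    have ha1a : 0 ≤ a / (1-a) := le_of_lt (div_pos ha0 (by linarith))
    have hmul : (a/(1-a)) * (-K) ≤ (a/(1-a)) * (Lx⁻¹ * (p + q) - (a * Lx)⁻¹ * p) :=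
      mul_le_mul_of_nonneg_left hTK ha1a
    have hrg : (a/(1-a)) * (-K) = -((a/(1-a))*K) := by ring
    linarith [halg1, h3, hmul]
  have halg2 : Lt⁻¹ * ((p + q) + r) - Lx⁻¹ * (p + q)
      = ((Lt - Lx)/Lt) * (r / (Lt - Lx) - Lx⁻¹ * (p + q)) := alg2 Lt Lx (p+q) r hLtne hLxne hLtLxne
  rw [halg2]
  have hc0 : 0 ≤ (Lt - Lx)/Lt := div_nonneg (by linarith) hLt0.le
  have hc1 : (Lt - Lx)/Lt ≤ (lam - 1)/lam := by
    rw [div_le_div_iff₀ hLt0 (lt_trans one_pos hlam)]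
    nlinarith
  have hD : -e - (a/(1-a)) * K ≤ 0 := by
    have : 0 ≤ (a/(1-a)) * K := mul_nonneg (div_nonneg ha0.le (by linarith)) hK
    linarith
  have h5 : ((Lt - Lx)/Lt) * (-e - (a/(1-a)) * K)
      ≤ ((Lt - Lx)/Lt) * (r / (Lt - Lx) - Lx⁻¹ * (p + q)) :=
    mul_le_mul_of_nonneg_left h4 hc0
  refine le_trans ?_ h5
  have h6 : ((lam-1)/lam) * (-e - (a/(1-a)) * K)
      ≤ ((Lt - Lx)/Lt) * (-e - (a/(1-a)) * K) := by
    exact mul_le_mul_of_nonpos_right hc1 hD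
  refine le_trans ?_ h6
  have hcoef : (lam-1)/lam * (a/(1-a)) = (lam - 1)/(L - lam) := by
    rw [ha_def]
    exact algcoef lam L (by positivity) (ne_of_gt hL0) (by intro h; nlinarith)
  have hlam0 : (0:ℝ) < lam := lt_trans one_pos hlam
  have h7 : (lam-1)/lam * e ≤ e := by
    rw [div_mul_eq_mul_div, div_le_iff₀ hlam0]
    nlinarith
  have hexp : ((lam-1)/lam) * (-e - (a/(1-a)) * K)
      = -((lam-1)/lam * e) - ((lam-1)/lam * (a/(1-a))) * K := by ring
  rw [hexp, hcoef]
  linarith [h7]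


lemma stepA {s : ℝ → ℝ} (hs : LocallyIntegrableOn s (Ici (1 : ℝ)))
    {L X₁ : ℝ} (hL : 1 < L) (hX₁ : 1 < X₁)
    (hslow : ∀ v, X₁ ≤ v → ∀ u ∈ Ioc v (v ^ L), s v - 1 ≤ s u) :
    ∃ K : ℝ, 0 ≤ K ∧ ∃ X₂ : ℝ, 1 < X₂ ∧
      ∀ x : ℝ, X₂ ≤ x → ∀ t ∈ Ioc x (x ^ Real.sqrt L), -K ≤ Tau s t - Tau s x := by
  set lam : ℝ := Real.sqrt L with hlam_def
  have hL0 : (0:ℝ) < L := lt_trans one_pos hL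
  have hlam1 : 1 < lam := by
    rw [hlam_def, show (1:ℝ) = Real.sqrt 1 by simp]
    exact Real.sqrt_lt_sqrt one_pos.le hL
  have hlam0 : (0:ℝ) < lam := lt_trans one_pos hlam1
  have hlamsq : lam * lam = L := Real.mul_self_sqrt hL0.le
  have hlamL : lam < L := by nlinarith
  clear_value lam
  set X₂ : ℝ := X₁ ^ lam with hX₂_def
  have hX₂1 : 1 < X₂ := Real.one_lt_rpow_iff_of_pos (lt_trans one_pos hX₁) |>.2 (Or.inl ⟨hX₁, hlam0⟩)
  have hX₂0 : (0:ℝ) < X₂ := lt_trans one_pos hX₂1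
  have hX₁X₂ : X₁ ≤ X₂ := by
    rw [hX₂_def]
    nth_rewrite 1 [show X₁ = X₁ ^ (1:ℝ) by rw [Real.rpow_one]]
    exact Real.rpow_le_rpow_left_iff hX₁ |>.2 hlam1.le
  clear_value X₂
  set B : ℝ := X₂ ^ L with hB_def
  have hX₂B : X₂ ≤ B := by
    nth_rewrite 1 [show X₂ = X₂ ^ (1:ℝ) by rw [Real.rpow_one]]
    exact Real.rpow_le_rpow_left_iff hX₂1 |>.2 hL.le
  have hBfold : (X₂ ^ lam) ^ lam = B := by
    rw [hB_def, ← Real.rpow_mul hX₂0.le, hlamsq]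
  have hX₂lamB : X₂ ^ lam ≤ B := by
    rw [hB_def]
    exact Real.rpow_le_rpow_left_iff hX₂1 |>.2 hlamL.le
  clear_value B
  set C : ℝ := ∫ u in (1:ℝ)..B, |s u / u| with hC_def
  have hC0 : 0 ≤ C := integral_nonneg (le_trans hX₂1.le hX₂B) (fun u _ => abs_nonneg _)
  have hlogX₂ : 0 < Real.log X₂ := Real.log_pos hX₂1
  have hTb : ∀ y : ℝ, X₂ ≤ y → y ≤ B → |Tau s y| ≤ C / Real.log X₂ := by
    intro y hy1 hy2
    rw [hC_def]
    exact Tbound hs hX₂1 hy1 hy2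
  clear_value C
  set K : ℝ := lam / (lam - 1) + 2 * C / Real.log X₂ + 1 with hK_def
  have hdivpos : 0 < lam / (lam - 1) := div_pos hlam0 (by linarith)
  have hKb0 : (0:ℝ) ≤ 2 * C / Real.log X₂ := by positivity
  have hK0 : 0 ≤ K := by rw [hK_def]; linarith
  have hKbK : 2 * C / Real.log X₂ ≤ K := by rw [hK_def]; linarith
  have hKge : lam / (lam - 1) ≤ K := by rw [hK_def]; linarith
  clear_value K
  refine ⟨K, hK0, X₂, hX₂1, ?_⟩
  -- base case
  have hbase : ∀ x : ℝ, X₂ ≤ x → x ≤ X₂ ^ lam → ∀ t ∈ Ioc x (x ^ lam), -K ≤ Tau s t - Tau s x := by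
    intro x hx hxle t ht
    have hx1 : 1 < x := lt_of_lt_of_le hX₂1 hx
    have hx0 : (0:ℝ) < x := lt_trans one_pos hx1
    have htB : t ≤ B := by
      calc t ≤ x ^ lam := ht.2
        _ ≤ (X₂ ^ lam) ^ lam := Real.rpow_le_rpow hx0.le hxle hlam0.le
        _ = B := hBfold
    have hxB : x ≤ B := le_trans hxle hX₂lamB
    have hXt : X₂ ≤ t := le_trans hx ht.1.le
    have h1 := hTb t hXt htB
    have h2 := hTb x hx hxB
    have hstep1 : -(2 * C / Real.log X₂) ≤ Tau s t - Tau s x := by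
      have hd : 2 * C / Real.log X₂ = C / Real.log X₂ + C / Real.log X₂ := by ring
      rw [hd]
      have h3 := neg_abs_le (Tau s t)
      have h4 := neg_abs_le (Tau s x)
      have h5 := le_abs_self (Tau s x)
      linarith
    linarith
  -- inductive claim
  have hind : ∀ n : ℕ, ∀ x : ℝ, X₂ ≤ x → x ≤ X₂ ^ (lam ^ n) →
      ∀ t ∈ Ioc x (x ^ lam), -K ≤ Tau s t - Tau s x := by
    intro n
    induction n with
    | zero =>
        intro x hx hxle t ht
        apply hbase x hx ?_ t ht
        refine le_trans ?_ (le_of_eq (Real.rpow_one X₂).symm) |>.trans ?_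
        · simpa using hxle
        · exact Real.rpow_le_rpow_left_iff hX₂1 |>.2 hlam1.le
    | succ n IH =>
        intro x hx hxle t ht
        rcases le_or_gt x (X₂ ^ lam) with hc | hc
        · exact hbase x hx hc t ht
        · have hx1 : 1 < x := lt_of_lt_of_le hX₂1 hx
          have hx0 : (0:ℝ) < x := lt_trans one_pos hx1
          have hexp : lam / L = 1 / lam := by
            rw [← hlamsq]; field_simp
          set x' : ℝ := x ^ (lam / L) with hx'_def
          have hx'eq : x' = x ^ (1/lam) := by rw [hx'_def, hexp]
          -- x' ≥ X₂  (indeed > )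
          have hx'X₂ : X₂ ≤ x' := by
            rw [hx'eq]
            calc X₂ = (X₂ ^ lam) ^ (1/lam) := by
                  rw [← Real.rpow_mul hX₂0.le, mul_one_div, div_self (ne_of_gt hlam0), Real.rpow_one]
              _ ≤ x ^ (1/lam) := Real.rpow_le_rpow (Real.rpow_nonneg hX₂0.le _) hc.le (by positivity)
          -- x' ≤ X₂ ^ lam ^ n
          have hx'le : x' ≤ X₂ ^ (lam ^ n) := by
            rw [hx'eq]
            calc x ^ (1/lam) ≤ (X₂ ^ (lam ^ (n+1))) ^ (1/lam) :=
                  Real.rpow_le_rpow hx0.le hxle (by positivity)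
              _ = X₂ ^ (lam ^ n) := by
                  rw [← Real.rpow_mul hX₂0.le]
                  congr 1
                  rw [pow_succ, mul_one_div, mul_div_assoc, div_self (ne_of_gt hlam0), mul_one]
          -- x ∈ Ioc x' (x' ^ lam)
          have hx'x : x' < x := by
            rw [hx'eq]
            nth_rewrite 2 [show x = x ^ (1:ℝ) by rw [Real.rpow_one]]
            apply Real.rpow_lt_rpow_left_iff hx1 |>.2
            rw [div_lt_one hlam0]; exact hlam1
          have hx'pow : x' ^ lam = x := by
            rw [hx'eq, ← Real.rpow_mul hx0.le, one_div_mul_cancel (ne_of_gt hlam0), Real.rpow_one]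
          have hTK : -K ≤ Tau s x - Tau s x' := by
            apply IH x' hx'X₂ hx'le x
            exact ⟨hx'x, le_of_eq hx'pow.symm⟩
          have hX₁x' : X₁ ≤ x' := le_trans hX₁X₂ hx'X₂
          have hch := chain hs hL hlam1 hlamL one_pos hK0 hX₁ hx1 hslow
            (by rw [← hx'_def]; exact hX₁x') (by rw [← hx'_def]; exact hTK) ht
          refine le_trans ?_ hch
          have hcoefeq : (lam - 1)/(L - lam) = 1/lam := by
            rw [← hlamsq]
            rw [div_eq_div_iff (by nlinarith) (ne_of_gt hlam0 |> fun h => by positivity)]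
            ring
          rw [hcoefeq]
          -- -K ≤ -1 - (1/lam) K  ⟺  K (1 - 1/lam) ≥ 1
          have hKl : lam ≤ K * (lam - 1) := (div_le_iff₀ (by linarith)).1 hKge
          have h1 : 1/lam * K ≤ K - 1 := by
            rw [one_div, inv_mul_eq_div, div_le_iff₀ hlam0]
            nlinarith
          linarith
  -- conclude
  intro x hx t ht
  obtain ⟨n, hn⟩ := pow_unbounded_of_one_lt (Real.log x / Real.log X₂) hlam1
  apply hind n x hx ?_ t ht
  have hx0 : (0:ℝ) < x := lt_of_lt_of_le hX₂0 hx
  have hlog : Real.log x < (lam ^ n) * Real.log X₂ := by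
    rw [div_lt_iff₀ hlogX₂] at hn
    exact hn
  exact le_of_lt ((Real.lt_rpow_iff_log_lt hx0 hX₂0).2 hlog)


set_option maxHeartbeats 2000000 in
theorem stmt13 (s : ℝ → ℝ)
    (hs : LocallyIntegrableOn s (Ici (1 : ℝ)))
    (hsd : SlowlyDecreasingL1 s) :
    SlowlyDecreasingL1 (fun t : ℝ => (Real.log t)⁻¹ * ∫ x in (1 : ℝ)..t, s x / x) := by
  show SlowlyDecreasingL1 (Tau s)
  -- extraction of slow decrease in usable form
  have hex : ∀ ε : ℝ, 0 < ε → ∃ l : ℝ, 1 < l ∧ ∃ X : ℝ, 1 < X ∧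
      ∀ v, X ≤ v → ∀ u ∈ Ioc v (v ^ l), s v - ε ≤ s u := by
    intro ε hε
    unfold SlowlyDecreasingL1 at hsd
    have hneg : ((-ε : ℝ) : EReal) < (0 : EReal) := by
      rw [← EReal.coe_zero, EReal.coe_lt_coe_iff]; linarith
    have h0 := lt_of_lt_of_le hneg hsd
    rw [lt_iSup_iff] at h0
    obtain ⟨l, h0⟩ := h0
    rw [lt_iSup_iff] at h0
    obtain ⟨hl, h0⟩ := h0
    have hev := eventually_lt_of_lt_liminf h0
    rw [eventually_atTop] at hev
    obtain ⟨X₀, hX₀⟩ := hev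
    refine ⟨l, hl, max X₀ 2, lt_of_lt_of_le one_lt_two (le_max_right _ _), ?_⟩
    intro v hv u hu
    have h1 := hX₀ v (le_trans (le_max_left _ _) hv)
    have h2 : sInf ((fun t : ℝ => ((s t - s v : ℝ) : EReal)) '' Ioc v (v ^ l))
        ≤ ((s u - s v : ℝ) : EReal) := sInf_le ⟨u, hu, rfl⟩
    have h3 := lt_of_lt_of_le h1 h2
    rw [EReal.coe_lt_coe_iff] at h3
    linarith
  unfold SlowlyDecreasingL1
  by_contra hcon
  rw [not_le] at hcon
  obtain ⟨r, hr1, hr2⟩ := EReal.exists_between_coe_real hcon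
  have hrneg : r < 0 := by
    rw [← EReal.coe_zero, EReal.coe_lt_coe_iff] at hr2; exact hr2
  suffices H : ∃ l : ℝ, 1 < l ∧ (↑r : EReal) ≤ liminf (fun x : ℝ =>
      sInf ((fun t : ℝ => ((Tau s t - Tau s x : ℝ) : EReal)) '' Ioc x (x ^ l))) atTop by
    obtain ⟨l, hl, hH⟩ := H
    have hle : liminf (fun x : ℝ =>
        sInf ((fun t : ℝ => ((Tau s t - Tau s x : ℝ) : EReal)) '' Ioc x (x ^ l))) atTop
        ≤ ⨆ l ∈ Ioi (1:ℝ), liminf (fun x : ℝ =>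
        sInf ((fun t : ℝ => ((Tau s t - Tau s x : ℝ) : EReal)) '' Ioc x (x ^ l))) atTop :=
      le_iSup₂ (f := fun l _ => liminf (fun x : ℝ =>
        sInf ((fun t : ℝ => ((Tau s t - Tau s x : ℝ) : EReal)) '' Ioc x (x ^ l))) atTop) l hl
    exact absurd (lt_of_le_of_lt (le_trans hH hle) hr1) (lt_irrefl _)
  obtain ⟨L, hL, X₁, hX₁, hslow1⟩ := hex 1 one_pos
  obtain ⟨K, hK0, X₂, hX₂, hA⟩ := stepA hs hL hX₁ hslow1
  set ε : ℝ := -r with hε_def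
  have hε : 0 < ε := by rw [hε_def]; linarith
  obtain ⟨l₀, hl₀, X₃, hX₃, hslowε⟩ := hex (ε/2) (by linarith)
  have hsL : 1 < Real.sqrt L := by
    rw [show (1:ℝ) = Real.sqrt 1 by simp]
    exact Real.sqrt_lt_sqrt one_pos.le hL
  set L' : ℝ := min l₀ (Real.sqrt L) with hL'_def
  have hL'1 : 1 < L' := lt_min hl₀ hsL
  have hL'l₀ : L' ≤ l₀ := min_le_left _ _
  have hL'sL : L' ≤ Real.sqrt L := min_le_right _ _
  clear_value L'
  have hslow' : ∀ v, X₃ ≤ v → ∀ u ∈ Ioc v (v ^ L'), s v - ε/2 ≤ s u := by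
    intro v hv u hu
    apply hslowε v hv u
    refine ⟨hu.1, le_trans hu.2 ?_⟩
    exact Real.rpow_le_rpow_left_iff (lt_of_lt_of_le hX₃ hv) |>.2 hL'l₀
  -- choose lam close to 1
  set m : ℝ := min (1/2) (ε/(4*(K+1))) with hm_def
  have hm0 : 0 < m := lt_min (by norm_num) (by positivity)
  have hmhalf : m ≤ 1/2 := min_le_left _ _
  have hmε : m ≤ ε/(4*(K+1)) := min_le_right _ _
  clear_value m
  set lam : ℝ := 1 + (L'-1)*m with hlam_def
  have hlam1 : 1 < lam := by rw [hlam_def]; nlinarith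
  have hlamL' : lam < L' := by rw [hlam_def]; nlinarith
  have hlamsub : lam - 1 = (L'-1)*m := by rw [hlam_def]; ring
  clear_value lam
  have hK1 : (0:ℝ) < K + 1 := by linarith
  have hcoef : (lam-1)/(L'-lam) * K ≤ ε/2 := by
    have h1 : (L'-1)/2 ≤ L' - lam := by nlinarith
    have h2 : (lam-1)/(L'-lam) ≤ ε/(2*(K+1)) := by
      rw [div_le_iff₀ (by nlinarith : (0:ℝ) < L'-lam)]
      have h3 : (L'-1)*m ≤ (L'-1)*(ε/(4*(K+1))) :=
        mul_le_mul_of_nonneg_left hmε (by linarith)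
      have h4 : ε/(2*(K+1)) * ((L'-1)/2) ≤ ε/(2*(K+1)) * (L'-lam) :=
        mul_le_mul_of_nonneg_left h1 (by positivity)
      have h5 : ε/(2*(K+1)) * ((L'-1)/2) = (L'-1)*(ε/(4*(K+1))) := by
        field_simp
        ring
      linarith [hlamsub]
    have h6 : (lam-1)/(L'-lam) * K ≤ ε/(2*(K+1)) * K :=
      mul_le_mul_of_nonneg_right h2 hK0
    have h7 : ε/(2*(K+1)) * K ≤ ε/2 := by
      rw [div_mul_eq_mul_div, div_le_div_iff₀ (by positivity) two_pos]
      nlinarith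
    linarith
  -- threshold X₄
  set M : ℝ := max (max X₂ X₃) 2 with hM_def
  have hM2 : (2:ℝ) ≤ M := le_max_right _ _
  have hMX₂ : X₂ ≤ M := le_trans (le_max_left _ _) (le_max_left _ _)
  have hMX₃ : X₃ ≤ M := le_trans (le_max_right _ _) (le_max_left _ _)
  have hM1 : 1 < M := lt_of_lt_of_le one_lt_two hM2
  have hM0 : (0:ℝ) < M := lt_trans one_pos hM1
  clear_value M
  have hlam0 : (0:ℝ) < lam := by linarith
  have hL'0 : (0:ℝ) < L' := by linarith
  set X₄ : ℝ := M ^ (L'/lam) with hX₄_def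
  have hX₄1 : 1 < X₄ := by
    rw [hX₄_def]
    exact Real.one_lt_rpow_iff_of_pos hM0 |>.2 (Or.inl ⟨hM1, by positivity⟩)
  refine ⟨lam, hlam1, ?_⟩
  apply Filter.le_liminf_of_le (by isBoundedDefault)
  rw [eventually_atTop]
  refine ⟨X₄, ?_⟩
  intro x hx
  apply le_sInf
  rintro b ⟨t, ht, rfl⟩
  rw [EReal.coe_le_coe_iff]
  have hx1 : 1 < x := lt_of_lt_of_le hX₄1 hx
  have hx0 : (0:ℝ) < x := lt_trans one_pos hx1
  have hx'M : M ≤ x ^ (lam/L') := by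
    calc M = (M ^ (L'/lam)) ^ (lam/L') := by
          have hee : L'/lam * (lam/L') = 1 := by field_simp
          rw [← Real.rpow_mul hM0.le, hee, Real.rpow_one]
      _ ≤ x ^ (lam/L') := Real.rpow_le_rpow (Real.rpow_nonneg hM0.le _)
          (by rw [← hX₄_def]; exact hx) (by positivity)
  have hTK : -K ≤ Tau s x - Tau s (x ^ (lam/L')) := by
    apply hA (x ^ (lam/L')) (le_trans hMX₂ hx'M) x
    constructor
    · nth_rewrite 2 [show x = x ^ (1:ℝ) by rw [Real.rpow_one]]
      apply Real.rpow_lt_rpow_left_iff hx1 |>.2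
      rw [div_lt_one hL'0]; exact hlamL'
    · rw [← Real.rpow_mul hx0.le]
      nth_rewrite 1 [show x = x ^ (1:ℝ) by rw [Real.rpow_one]]
      apply Real.rpow_le_rpow_left_iff hx1 |>.2
      rw [div_mul_eq_mul_div, le_div_iff₀ hL'0]
      nlinarith [hL'sL, hlam1, hL'1, hsL]
  have hch := chain hs hL'1 hlam1 hlamL' (by linarith : (0:ℝ) < ε/2) hK0 hX₃ hx1 hslow'
    (le_trans hMX₃ hx'M) hTK ht
  have : r = -ε := by rw [hε_def]; ring
  rw [this]
  linarith
end

section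
/- If s : [1,∞) → ℂ is locally integrable and slowly oscillating with respect to logarithmic summability, then its logarithmic mean τ(t) := (1/log t)·∫₁ᵗ s(x)/x dx is also slowly oscillating with respect to logarithmic summability. -/
open Filter MeasureTheory Set intervalIntegral
open Topology

lemma soL1_to (s : ℝ → ℂ) (h : SlowlyOscillatingL1 s) :
    ∀ ε : ℝ, 0 < ε → ∃ l : ℝ, 1 < l ∧ ∀ᶠ x in atTop, ∀ t ∈ Ioc x (x ^ l),
      ‖s t - s x‖ < ε := by
  intro ε hε
  have h0 : (⨅ l ∈ Set.Ioi (1:ℝ), Filter.limsup (fun x : ℝ =>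
      sSup ((fun t : ℝ => ((‖s t - s x‖ : ℝ) : EReal)) '' Set.Ioc x (x ^ l)))
      Filter.atTop) < (ε : EReal) := by
    rw [h]; exact_mod_cast hε
  simp only [iInf_lt_iff] at h0
  obtain ⟨l, hl1, hlim⟩ := h0
  refine ⟨l, hl1, ?_⟩
  filter_upwards [Filter.eventually_lt_of_limsup_lt hlim] with x hx t ht
  have h2 : ((‖s t - s x‖ : ℝ) : EReal) < (ε : EReal) :=
    lt_of_le_of_lt (le_sSup (Set.mem_image_of_mem (fun t : ℝ => ((‖s t - s x‖ : ℝ) : EReal)) ht)) hx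
  exact_mod_cast h2

lemma soL1_of (s : ℝ → ℂ)
    (h : ∀ ε : ℝ, 0 < ε → ∃ l : ℝ, 1 < l ∧ ∀ᶠ x in atTop, ∀ t ∈ Ioc x (x ^ l),
      ‖s t - s x‖ ≤ ε) : SlowlyOscillatingL1 s := by
  unfold SlowlyOscillatingL1
  apply le_antisymm
  · apply le_of_forall_gt_imp_ge_of_dense
    intro c hc
    obtain ⟨r, hr0, hrc⟩ := EReal.lt_iff_exists_real_btwn.mp hc
    obtain ⟨l, hl1, hev⟩ := h r (by exact_mod_cast hr0)
    refine le_trans (iInf₂_le l hl1) (le_trans ?_ hrc.le)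
    refine Filter.limsup_le_of_le (by isBoundedDefault) ?_
    filter_upwards [hev] with x hx
    apply sSup_le
    rintro a ⟨t, ht, rfl⟩
    show ((‖s t - s x‖ : ℝ) : EReal) ≤ (r : EReal)
    exact_mod_cast hx t ht
  · refine le_iInf₂ fun l hl => ?_
    apply Filter.le_limsup_of_frequently_le'
    apply Filter.Eventually.frequently
    filter_upwards [Filter.eventually_gt_atTop (1:ℝ)] with x hx
    have hmem : x ^ l ∈ Ioc x (x ^ l) := by
      constructor
      · nth_rewrite 1 [← Real.rpow_one x]
        exact Real.rpow_lt_rpow_of_exponent_lt hx hl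
      · exact le_rfl
    have h0 : (0 : EReal) ≤ ((‖s (x ^ l) - s x‖ : ℝ) : EReal) := by
      exact_mod_cast norm_nonneg _
    exact le_trans h0 (le_sSup (Set.mem_image_of_mem (fun t : ℝ => ((‖s t - s x‖ : ℝ) : EReal)) hmem))



lemma chainA (s : ℝ → ℂ) (l₀ X₀ : ℝ) (hl₀ : 1 < l₀) (hX₀ : 3 ≤ X₀)
    (hosc : ∀ x, X₀ ≤ x → ∀ t ∈ Ioc x (x ^ l₀), ‖s t - s x‖ ≤ 1) :
    ∀ n : ℕ, ∀ u x : ℝ, X₀ ≤ u → u ≤ x → x ≤ u ^ (l₀ ^ (n + 1)) →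
      ‖s x - s u‖ ≤ n + 1 := by
  intro n
  induction n with
  | zero =>
    intro u x hu hux hx
    rcases eq_or_lt_of_le hux with rfl | h
    · simp
    · have := hosc u hu x ⟨h, by rw [pow_one] at hx; exact hx⟩
      simpa using this
  | succ n ih =>
    intro u x hu hux hx
    have hu1 : (1 : ℝ) < u := by linarith
    by_cases hcase : x ≤ u ^ l₀
    · rcases eq_or_lt_of_le hux with rfl | h
      · rw [sub_self, norm_zero]; push_cast; linarith [Nat.cast_nonneg (α := ℝ) n]
      · have := hosc u hu x ⟨h, hcase⟩
        have h2 : (1 : ℝ) ≤ (n : ℝ) + 1 + 1 := by linarith [Nat.cast_nonneg (α := ℝ) n]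
        push_cast
        linarith
    · push_neg at hcase
      have huu' : u < u ^ l₀ := by
        nth_rewrite 1 [← Real.rpow_one u]
        exact Real.rpow_lt_rpow_of_exponent_lt hu1 hl₀
      have hx' : x ≤ (u ^ l₀) ^ (l₀ ^ (n + 1)) := by
        have h0u : (0 : ℝ) ≤ u := by linarith
        rw [← Real.rpow_mul h0u]
        rw [pow_succ, mul_comm] at hx
        exact hx
      have h1 := ih (u ^ l₀) x (le_trans hu huu'.le) hcase.le hx'
      have h2 := hosc u hu (u ^ l₀) ⟨huu', le_rfl⟩
      calc ‖s x - s u‖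
          ≤ ‖s x - s (u ^ l₀)‖ + ‖s (u ^ l₀) - s u‖ :=
            norm_sub_le_norm_sub_add_norm_sub _ _ _
        _ ≤ (n + 1) + 1 := add_le_add h1 h2
        _ = (↑(n + 1) : ℝ) + 1 := by push_cast; ring

lemma boundB (s : ℝ → ℂ) (l₀ X₀ : ℝ) (hl₀ : 1 < l₀) (hX₀ : 3 ≤ X₀)
    (hosc : ∀ x, X₀ ≤ x → ∀ t ∈ Ioc x (x ^ l₀), ‖s t - s x‖ ≤ 1)
    (u x : ℝ) (hu : X₀ ≤ u) (hux : u ≤ x) :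
    ‖s x - s u‖ ≤
      (Real.log (Real.log x) - Real.log (Real.log u)) / Real.log l₀ + 2 := by
  have hc : 0 < Real.log l₀ := Real.log_pos hl₀
  have hu0 : (0 : ℝ) < u := by linarith
  have hx0 : (0 : ℝ) < x := by linarith
  have hlogu : 1 < Real.log u := by
    rw [Real.lt_log_iff_exp_lt hu0]
    calc Real.exp 1 < 2.7182818286 := Real.exp_one_lt_d9
      _ ≤ u := by linarith
  have hlogux : Real.log u ≤ Real.log x := Real.log_le_log hu0 hux
  set c := Real.log l₀ with hcdef
  set R := Real.log (Real.log x) - Real.log (Real.log u) with hR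
  have hR0 : 0 ≤ R := sub_nonneg.mpr (Real.log_le_log (by linarith) hlogux)
  set n := ⌈R / c⌉₊ with hn
  have hxn : x ≤ u ^ (l₀ ^ (n + 1)) := by
    have h1 : R / c ≤ n := Nat.le_ceil _
    have h2 : R ≤ ((n : ℝ) + 1) * c := by
      have := (div_le_iff₀ hc).mp h1
      nlinarith
    have hexp : Real.log x / Real.log u = Real.exp R := by
      rw [hR, Real.exp_sub, Real.exp_log (by linarith), Real.exp_log (by linarith)]
    have hpow : (l₀ : ℝ) ^ (n + 1) = Real.exp (((n : ℝ) + 1) * c) := by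
      rw [← Real.exp_log (pow_pos (by linarith) (n + 1)), Real.log_pow]
      push_cast; ring_nf; rfl
    have h3 : Real.log x / Real.log u ≤ l₀ ^ (n + 1) := by
      rw [hexp, hpow]
      exact Real.exp_le_exp.mpr h2
    have h4 : Real.log x ≤ l₀ ^ (n + 1) * Real.log u := by
      rw [div_le_iff₀ (by linarith)] at h3
      linarith [h3]
    calc x = Real.exp (Real.log x) := (Real.exp_log hx0).symm
      _ ≤ Real.exp (l₀ ^ (n + 1) * Real.log u) := Real.exp_le_exp.mpr h4
      _ = u ^ ((l₀ ^ (n + 1) : ℝ)) := by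
          rw [Real.rpow_def_of_pos hu0, mul_comm]
  have hchain := chainA s l₀ X₀ hl₀ hX₀ hosc n u x hu hux hxn
  have hceil : (n : ℝ) ≤ R / c + 1 := (Nat.ceil_lt_add_one (by positivity)).le
  calc ‖s x - s u‖ ≤ (n : ℝ) + 1 := hchain
    _ ≤ R / c + 2 := by linarith

lemma integ_div (s : ℝ → ℂ) (hs : LocallyIntegrableOn s (Ici (1 : ℝ)))
    {a b : ℝ} (ha : 1 ≤ a) (hab : a ≤ b) :
    IntervalIntegrable (fun u : ℝ => s u / u) volume a b := by
  rw [intervalIntegrable_iff_integrableOn_Ioc_of_le hab]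
  have hsub : Icc a b ⊆ Ici (1 : ℝ) := fun y hy => le_trans ha hy.1
  have h1 : IntegrableOn s (Icc a b) volume := hs.integrableOn_compact_subset hsub isCompact_Icc
  have h2 : IntegrableOn (fun u : ℝ => s u * ((u : ℂ))⁻¹) (Icc a b) volume := by
    apply h1.mul_continuousOn ?_ isCompact_Icc
    apply ContinuousOn.inv₀ (Complex.continuous_ofReal.continuousOn)
    intro y hy
    exact Complex.ofReal_ne_zero.mpr (ne_of_gt (lt_of_lt_of_le one_pos (le_trans ha hy.1)))
  simp only [div_eq_mul_inv]
  exact h2.mono_set Ioc_subset_Icc_self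

lemma integ_norm (s : ℝ → ℂ) (hs : LocallyIntegrableOn s (Ici (1 : ℝ)))
    {a b : ℝ} (ha : 1 ≤ a) (hab : a ≤ b) :
    IntervalIntegrable (fun u : ℝ => ‖s u‖) volume a b := by
  rw [intervalIntegrable_iff_integrableOn_Ioc_of_le hab]
  have hsub : Icc a b ⊆ Ici (1 : ℝ) := fun y hy => le_trans ha hy.1
  have h1 : IntegrableOn s (Icc a b) volume := hs.integrableOn_compact_subset hsub isCompact_Icc
  have h2 : IntegrableOn (fun u : ℝ => ‖s u‖) (Icc a b) volume := h1.norm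
  have h3 := h2.mono_set Ioc_subset_Icc_self
  simpa using h3

lemma tau_sub (s : ℝ → ℂ) (hs : LocallyIntegrableOn s (Ici (1 : ℝ)))
    (x : ℝ) (hx : 1 < x) :
    s x - (Real.log x)⁻¹ • ∫ u in (1 : ℝ)..x, s u / (u : ℂ)
      = (Real.log x)⁻¹ • ∫ u in (1 : ℝ)..x, (s x - s u) / (u : ℂ) := by
  have hlog : 0 < Real.log x := Real.log_pos hx
  have hint1 : IntervalIntegrable (fun u : ℝ => s u / u) volume 1 x :=
    integ_div s hs le_rfl hx.le
  have hint2 : IntervalIntegrable (fun u : ℝ => s x / u) volume 1 x := by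
    apply ContinuousOn.intervalIntegrable
    apply ContinuousOn.div continuousOn_const Complex.continuous_ofReal.continuousOn
    intro y hy
    rw [uIcc_of_le hx.le] at hy
    exact Complex.ofReal_ne_zero.mpr (ne_of_gt (lt_of_lt_of_le one_pos hy.1))
  have hconst : (∫ u in (1 : ℝ)..x, s x / (u : ℂ)) = s x * (Real.log x : ℂ) := by
    calc (∫ u in (1 : ℝ)..x, s x / (u : ℂ)) = ∫ u in (1 : ℝ)..x, s x * ((u : ℂ))⁻¹ := by
          simp only [div_eq_mul_inv]
      _ = s x * ∫ u in (1 : ℝ)..x, ((u : ℂ))⁻¹ := intervalIntegral.integral_const_mul _ _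
      _ = s x * (Real.log x : ℂ) := by
          congr 1
          have heq : (fun u : ℝ => ((u : ℂ))⁻¹) = fun u : ℝ => (((u⁻¹ : ℝ)) : ℂ) := by
            funext u; rw [Complex.ofReal_inv]
          rw [heq, intervalIntegral.integral_ofReal]
          norm_cast
          rw [integral_inv_of_pos one_pos (by linarith), div_one]
  have hsplit : (∫ u in (1 : ℝ)..x, (s x - s u) / (u : ℂ))
      = (∫ u in (1 : ℝ)..x, s x / (u : ℂ)) - ∫ u in (1 : ℝ)..x, s u / (u : ℂ) := by
    rw [← intervalIntegral.integral_sub hint2 hint1]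
    congr 1; funext u; rw [sub_div]
  rw [hsplit, hconst, smul_sub]
  congr 1
  rw [Complex.real_smul]
  have hne : (Real.log x : ℂ) ≠ 0 := Complex.ofReal_ne_zero.mpr hlog.ne'
  push_cast
  field_simp



lemma log3 {u : ℝ} (hu : 3 ≤ u) : 1 < Real.log u := by
  rw [Real.lt_log_iff_exp_lt (by linarith)]
  calc Real.exp 1 < 2.7182818286 := Real.exp_one_lt_d9
    _ ≤ u := by linarith

lemma ftcG (c X₀ x : ℝ) (hc : 0 < c) (hX₀ : 3 ≤ X₀) (hx : X₀ ≤ x) :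
    (∫ u in X₀..x, ((Real.log (Real.log x) - Real.log (Real.log u)) / c + 2) / u)
      = ((Real.log (Real.log x) * Real.log x
            - (Real.log x * Real.log (Real.log x) - Real.log x)) / c + 2 * Real.log x)
        - ((Real.log (Real.log x) * Real.log X₀
            - (Real.log X₀ * Real.log (Real.log X₀) - Real.log X₀)) / c + 2 * Real.log X₀) := by
  set A := Real.log (Real.log x) with hA
  have hcont : ContinuousOn
      (fun u : ℝ => ((A - Real.log (Real.log u)) / c + 2) / u) (Set.uIcc X₀ x) := by
    rw [uIcc_of_le hx]
    apply ContinuousOn.div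
    · apply ContinuousOn.add ?_ continuousOn_const
      apply ContinuousOn.div_const
      apply ContinuousOn.sub continuousOn_const
      apply ContinuousOn.log
      · apply ContinuousOn.log continuousOn_id
        intro y hy
        have : (3:ℝ) ≤ y := le_trans hX₀ hy.1
        simp only [id]; intro h; rw [h] at this; norm_num at this
      · intro y hy
        have h3 : (3:ℝ) ≤ y := le_trans hX₀ hy.1
        exact ne_of_gt (lt_trans one_pos (log3 h3))
    · exact continuousOn_id
    · intro y hy
      have : (3:ℝ) ≤ y := le_trans hX₀ hy.1
      intro h; rw [h] at this; norm_num at this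
  have key := intervalIntegral.integral_eq_sub_of_hasDerivAt
    (f := fun u : ℝ => (A * Real.log u - (Real.log u * Real.log (Real.log u) - Real.log u)) / c
      + 2 * Real.log u)
    (f' := fun u : ℝ => ((A - Real.log (Real.log u)) / c + 2) / u)
    (a := X₀) (b := x) ?_ ?_
  · rw [key]
  · intro u hu
    rw [uIcc_of_le hx] at hu
    have hu3 : (3:ℝ) ≤ u := le_trans hX₀ hu.1
    have hu0 : (0:ℝ) < u := by linarith
    have hlogu : 1 < Real.log u := log3 hu3
    have h₁ : HasDerivAt Real.log u⁻¹ u := Real.hasDerivAt_log hu0.ne'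
    have h₂ : HasDerivAt (fun y : ℝ => Real.log (Real.log y)) ((Real.log u)⁻¹ * u⁻¹) u :=
      (Real.hasDerivAt_log (by linarith)).comp u h₁
    have h₃ : HasDerivAt (fun y : ℝ => Real.log y * Real.log (Real.log y))
        (u⁻¹ * Real.log (Real.log u) + Real.log u * ((Real.log u)⁻¹ * u⁻¹)) u := h₁.mul h₂
    have h₄ : HasDerivAt (fun y : ℝ => A * Real.log y) (A * u⁻¹) u := h₁.const_mul A
    have h₅ := ((h₄.sub (h₃.sub h₁)).div_const c).add (h₁.const_mul 2)
    convert h₅ using 1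
    · rfl
    have hlogne : Real.log u ≠ 0 := ne_of_gt (lt_trans one_pos hlogu)
    field_simp
    ring
  · exact hcont.intervalIntegrable

lemma boundD (s : ℝ → ℂ) (hs : LocallyIntegrableOn s (Ici (1 : ℝ)))
    (l₀ X₀ : ℝ) (hl₀ : 1 < l₀) (hX₀ : 3 ≤ X₀)
    (hosc : ∀ x, X₀ ≤ x → ∀ t ∈ Ioc x (x ^ l₀), ‖s t - s x‖ ≤ 1) :
    ∃ B : ℝ, 0 < B ∧ ∀ᶠ x in atTop,
      ‖s x - (Real.log x)⁻¹ • ∫ u in (1 : ℝ)..x, s u / (u : ℂ)‖ ≤ B := by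
  have hc : 0 < Real.log l₀ := Real.log_pos hl₀
  set c := Real.log l₀ with hcdef
  set K := ‖s X₀‖ + 2 with hKdef
  set M := (∫ u in (1:ℝ)..X₀, ‖s u‖) with hMdef
  set F₀ := Real.log X₀ * Real.log (Real.log X₀) - Real.log X₀ with hF₀def
  have hsx : ∀ x, X₀ ≤ x → ‖s x‖ ≤ K + Real.log (Real.log x) / c := by
    intro x hx
    have h1 := boundB s l₀ X₀ hl₀ hX₀ hosc X₀ x le_rfl hx
    have h2 : ‖s x‖ ≤ ‖s X₀‖ + ‖s x - s X₀‖ := by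
      calc ‖s x‖ = ‖s X₀ + (s x - s X₀)‖ := by ring_nf
        _ ≤ _ := norm_add_le _ _
    have h3 : 0 ≤ Real.log (Real.log X₀) := Real.log_nonneg (le_of_lt (log3 hX₀))
    have h4 : 0 ≤ Real.log (Real.log X₀) / c := div_nonneg h3 hc.le
    rw [sub_div] at h1
    linarith
  have claim : ∀ x, X₀ ≤ x →
      ‖s x - (Real.log x)⁻¹ • ∫ u in (1 : ℝ)..x, s u / (u : ℂ)‖
      ≤ 1/c + 2 + ((K + Real.log (Real.log x)/c) * (X₀ - 1) + M + |F₀|/c) / Real.log x := by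
    intro x hx
    have hx3 : (3:ℝ) ≤ x := le_trans hX₀ hx
    have hx1 : (1:ℝ) < x := by linarith
    have hlogx1 : 1 < Real.log x := log3 hx3
    have hlogx0 : 0 < Real.log x := lt_trans one_pos hlogx1
    have hA0 : 0 ≤ Real.log (Real.log x) := Real.log_nonneg hlogx1.le
    set A := Real.log (Real.log x) with hAdef
    rw [tau_sub s hs x hx1, norm_smul, Real.norm_eq_abs,
      abs_of_pos (inv_pos.mpr hlogx0)]
    have hint1 : IntervalIntegrable (fun u : ℝ => s u / u) volume 1 x :=
      integ_div s hs le_rfl hx1.le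
    have hint2 : IntervalIntegrable (fun u : ℝ => s x / u) volume 1 x := by
      apply ContinuousOn.intervalIntegrable
      apply ContinuousOn.div continuousOn_const Complex.continuous_ofReal.continuousOn
      intro y hy
      rw [uIcc_of_le hx1.le] at hy
      exact Complex.ofReal_ne_zero.mpr (ne_of_gt (lt_of_lt_of_le one_pos hy.1))
    have hintd : IntervalIntegrable (fun u : ℝ => (s x - s u) / (u:ℂ)) volume 1 x := by
      have := hint2.sub hint1
      simpa [sub_div] using this
    have hnormd : IntervalIntegrable (fun u : ℝ => ‖(s x - s u) / (u:ℂ)‖) volume 1 x :=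
      hintd.norm
    have hn1 : IntervalIntegrable (fun u : ℝ => ‖(s x - s u) / (u:ℂ)‖) volume 1 X₀ :=
      hnormd.mono_set (by
        rw [uIcc_of_le hx1.le, uIcc_of_le (by linarith : (1:ℝ) ≤ X₀)]
        exact Icc_subset_Icc le_rfl hx)
    have hn2 : IntervalIntegrable (fun u : ℝ => ‖(s x - s u) / (u:ℂ)‖) volume X₀ x :=
      hnormd.mono_set (by
        rw [uIcc_of_le hx1.le, uIcc_of_le hx]
        exact Icc_subset_Icc (by linarith) le_rfl)
    have hIsplit : (∫ u in (1:ℝ)..x, ‖(s x - s u)/(u:ℂ)‖)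
        = (∫ u in (1:ℝ)..X₀, ‖(s x - s u)/(u:ℂ)‖) + ∫ u in X₀..x, ‖(s x - s u)/(u:ℂ)‖ :=
      (intervalIntegral.integral_add_adjacent_intervals hn1 hn2).symm
    have hRHS1 : IntervalIntegrable (fun u : ℝ => ‖s x‖ + ‖s u‖)
        volume 1 X₀ :=
      intervalIntegrable_const.add (integ_norm s hs le_rfl (by linarith))
    have hp1 : (∫ u in (1:ℝ)..X₀, ‖(s x - s u)/(u:ℂ)‖)
        ≤ ‖s x‖ * (X₀ - 1) + M := by
      have hmono := intervalIntegral.integral_mono_on (by linarith : (1:ℝ) ≤ X₀) hn1 hRHS1 ?_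
      · calc (∫ u in (1:ℝ)..X₀, ‖(s x - s u)/(u:ℂ)‖)
            ≤ ∫ u in (1:ℝ)..X₀, (‖s x‖ + ‖s u‖) := hmono
          _ = ‖s x‖ * (X₀ - 1) + M := by
            rw [intervalIntegral.integral_add intervalIntegrable_const
              (integ_norm s hs le_rfl (by linarith)), intervalIntegral.integral_const]
            rw [smul_eq_mul]
            ring
      · intro u hu
        have hu1 : (1:ℝ) ≤ u := hu.1
        have hnu : (1:ℝ) ≤ ‖((u:ℝ):ℂ)‖ := by
          rw [Complex.norm_real, Real.norm_eq_abs, abs_of_pos (by linarith)]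
          exact hu1
        calc ‖(s x - s u)/(u:ℂ)‖ = ‖s x - s u‖ / ‖((u:ℝ):ℂ)‖ := norm_div _ _
          _ ≤ ‖s x - s u‖ := by
              apply div_le_self (norm_nonneg _) hnu
          _ ≤ ‖s x‖ + ‖s u‖ := norm_sub_le _ _
          _ = ‖s x‖ + ‖s u‖ := by
              rfl
    have hcont2 : ContinuousOn (fun u : ℝ => ((A - Real.log (Real.log u)) / c + 2) / u)
        (Set.uIcc X₀ x) := by
      rw [uIcc_of_le hx]
      apply ContinuousOn.div
      · apply ContinuousOn.add ?_ continuousOn_const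
        apply ContinuousOn.div_const
        apply ContinuousOn.sub continuousOn_const
        apply ContinuousOn.log
        · apply ContinuousOn.log continuousOn_id
          intro y hy
          have h3 : (3:ℝ) ≤ y := le_trans hX₀ hy.1
          exact ne_of_gt (show (0:ℝ) < y by linarith)
        · intro y hy
          have h3 : (3:ℝ) ≤ y := le_trans hX₀ hy.1
          exact ne_of_gt (lt_trans one_pos (log3 h3))
      · exact continuousOn_id
      · intro y hy
        have h3 : (3:ℝ) ≤ y := le_trans hX₀ hy.1
        exact ne_of_gt (show (0:ℝ) < y by linarith)
    have hp2 : (∫ u in X₀..x, ‖(s x - s u)/(u:ℂ)‖)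
        ≤ ∫ u in X₀..x, ((A - Real.log (Real.log u))/c + 2)/u := by
      apply intervalIntegral.integral_mono_on hx hn2 hcont2.intervalIntegrable
      intro u hu
      have hu3 : (3:ℝ) ≤ u := le_trans hX₀ hu.1
      have hu0 : (0:ℝ) < u := by linarith
      have hb := boundB s l₀ X₀ hl₀ hX₀ hosc u x hu.1 hu.2
      calc ‖(s x - s u)/(u:ℂ)‖ = ‖s x - s u‖ / ‖((u:ℝ):ℂ)‖ := norm_div _ _
        _ = ‖s x - s u‖ / u := by
            rw [Complex.norm_real, Real.norm_eq_abs, abs_of_pos hu0]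
        _ ≤ ((A - Real.log (Real.log u))/c + 2)/u := by
            exact (div_le_div_iff_of_pos_right hu0).mpr hb
    have hIineq : ‖∫ u in (1:ℝ)..x, (s x - s u)/(u:ℂ)‖
        ≤ ∫ u in (1:ℝ)..x, ‖(s x - s u)/(u:ℂ)‖ :=
      intervalIntegral.norm_integral_le_integral_norm hx1.le
    have hftc := ftcG c X₀ x hc hX₀ hx
    have hGb : (∫ u in X₀..x, ((A - Real.log (Real.log u))/c + 2)/u)
        ≤ Real.log x / c + 2 * Real.log x + |F₀|/c := by
      rw [hftc]
      have h1 : 0 ≤ A * Real.log X₀ := mul_nonneg hA0 (Real.log_nonneg (by linarith))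
      have h2 : 0 ≤ Real.log X₀ := Real.log_nonneg (by linarith)
      have e : (A * Real.log x - (Real.log x * A - Real.log x)) / c + 2 * Real.log x
            - ((A * Real.log X₀ - (Real.log X₀ * Real.log (Real.log X₀) - Real.log X₀)) / c
              + 2 * Real.log X₀)
          = Real.log x / c + 2 * Real.log x - 2 * Real.log X₀
            + ((Real.log X₀ * Real.log (Real.log X₀) - Real.log X₀) - A * Real.log X₀) / c := by
        ring
      rw [e]
      have h5 : ((Real.log X₀ * Real.log (Real.log X₀) - Real.log X₀) - A * Real.log X₀) / c
          ≤ |F₀| / c := by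
        gcongr
        rw [hF₀def]
        have := le_abs_self F₀
        rw [hF₀def] at this
        linarith
      linarith
    have habs : ‖s x‖ ≤ K + A / c := hsx x hx
    have hX₀1 : (0:ℝ) ≤ X₀ - 1 := by linarith
    have hprod := mul_le_mul_of_nonneg_right habs hX₀1
    have htot : ‖∫ u in (1:ℝ)..x, (s x - s u)/(u:ℂ)‖
        ≤ (K + A/c) * (X₀ - 1) + M + |F₀|/c + Real.log x / c + 2 * Real.log x := by
      calc ‖∫ u in (1:ℝ)..x, (s x - s u)/(u:ℂ)‖
          ≤ ∫ u in (1:ℝ)..x, ‖(s x - s u)/(u:ℂ)‖ := hIineq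
        _ = (∫ u in (1:ℝ)..X₀, ‖(s x - s u)/(u:ℂ)‖)
            + ∫ u in X₀..x, ‖(s x - s u)/(u:ℂ)‖ := hIsplit
        _ ≤ (‖s x‖ * (X₀ - 1) + M)
            + (Real.log x / c + 2 * Real.log x + |F₀|/c) := add_le_add hp1 (hp2.trans hGb)
        _ ≤ _ := by linarith
    calc (Real.log x)⁻¹ * ‖∫ u in (1:ℝ)..x, (s x - s u)/(u:ℂ)‖
        ≤ (Real.log x)⁻¹
          * ((K + A/c) * (X₀ - 1) + M + |F₀|/c + Real.log x / c + 2 * Real.log x) :=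
          mul_le_mul_of_nonneg_left htot (inv_nonneg.mpr hlogx0.le)
      _ = 1/c + 2 + ((K + A/c) * (X₀ - 1) + M + |F₀|/c) / Real.log x := by
          field_simp
          ring
  refine ⟨1/c + 3, by positivity, ?_⟩
  have hten : Tendsto (fun x : ℝ =>
      ((K + Real.log (Real.log x)/c) * (X₀ - 1) + M + |F₀|/c) / Real.log x) atTop (𝓝 0) := by
    have h1 : Tendsto (fun L : ℝ =>
        ((K + Real.log L/c) * (X₀ - 1) + M + |F₀|/c) / L) atTop (𝓝 0) := by
      have hlog : Tendsto (fun L : ℝ => Real.log L / L) atTop (𝓝 0) := by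
        simpa using Real.isLittleO_log_id_atTop.tendsto_div_nhds_zero
      have hconst : Tendsto (fun L : ℝ => (K * (X₀-1) + M + |F₀|/c) / L) atTop (𝓝 0) :=
        tendsto_const_nhds.div_atTop tendsto_id
      have hsum := hconst.add (hlog.const_mul ((X₀-1)/c))
      have heq : (fun L : ℝ => ((K + Real.log L/c) * (X₀ - 1) + M + |F₀|/c) / L)
          = fun L : ℝ => (K * (X₀-1) + M + |F₀|/c)/L + (X₀-1)/c * (Real.log L / L) := by
        funext L
        rw [show (K + Real.log L/c) * (X₀ - 1) + M + |F₀|/c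
            = (K * (X₀-1) + M + |F₀|/c) + ((X₀-1)/c) * Real.log L from by ring,
          add_div, mul_div_assoc]
      rw [heq]
      simpa using hsum
    exact h1.comp Real.tendsto_log_atTop
  have hev1 := hten.eventually_le_const (show (0:ℝ) < 1 by norm_num)
  filter_upwards [hev1, eventually_ge_atTop X₀] with x h1 h2
  have h3 := claim x h2
  linarith

theorem stmt14 (s : ℝ → ℂ)
    (hs : LocallyIntegrableOn s (Ici (1 : ℝ)))
    (hso : SlowlyOscillatingL1 s) :
    SlowlyOscillatingL1
      (fun t : ℝ => (Real.log t)⁻¹ • ∫ x in (1 : ℝ)..t, s x / (x : ℂ)) := by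
  apply soL1_of
  intro ε hε
  obtain ⟨l₀, hl₀, hev₀⟩ := soL1_to s hso 1 one_pos
  rw [eventually_atTop] at hev₀
  obtain ⟨X₀', hX₀'⟩ := hev₀
  set X₀ := max X₀' 3 with hX₀def
  have hosc : ∀ x, X₀ ≤ x → ∀ t ∈ Ioc x (x ^ l₀), ‖s t - s x‖ ≤ 1 :=
    fun x hx t ht => (hX₀' x (le_trans (le_max_left _ _) hx) t ht).le
  obtain ⟨B, hB, hevB⟩ := boundD s hs l₀ X₀ hl₀ (le_max_right _ _) hosc
  obtain ⟨l₁, hl₁, hev₁⟩ := soL1_to s hso (ε/2) (by positivity)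
  set l := min l₁ (1 + ε/(2*B)) with hldef
  have hl : 1 < l := lt_min hl₁ (by nlinarith [div_pos hε (by linarith : (0:ℝ) < 2*B)])
  refine ⟨l, hl, ?_⟩
  filter_upwards [hevB, hev₁, eventually_ge_atTop (3:ℝ)] with x hBx h₁x hx3
  intro t ht
  show ‖(Real.log t)⁻¹ • (∫ u in (1:ℝ)..t, s u / (u:ℂ))
      - (Real.log x)⁻¹ • ∫ u in (1:ℝ)..x, s u / (u:ℂ)‖ ≤ ε
  have hx1 : (1:ℝ) < x := by linarith
  have hx0 : (0:ℝ) < x := by linarith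
  have hxt : x < t := ht.1
  have ht0 : (0:ℝ) < t := by linarith
  have hlogx1 : 1 < Real.log x := log3 hx3
  have hlogx0 : 0 < Real.log x := by linarith
  have hlogt0 : 0 < Real.log t := by
    have := Real.log_le_log hx0 hxt.le
    linarith
  have hlogxt : Real.log x ≤ Real.log t := Real.log_le_log hx0 hxt.le
  have htl1 : t ≤ x ^ l₁ := le_trans ht.2 (Real.rpow_le_rpow_of_exponent_le hx1.le (min_le_left _ _))
  have hlogtl : Real.log t ≤ l * Real.log x := by
    have h1 : Real.log t ≤ Real.log (x ^ l) := Real.log_le_log ht0 ht.2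
    rwa [Real.log_rpow hx0] at h1
  -- integrabilities
  have hi1x : IntervalIntegrable (fun u : ℝ => s u / u) volume 1 x := integ_div s hs le_rfl hx1.le
  have hixt : IntervalIntegrable (fun u : ℝ => s u / u) volume x t := integ_div s hs hx1.le hxt.le
  have hic : IntervalIntegrable (fun u : ℝ => s x / u) volume x t := by
    apply ContinuousOn.intervalIntegrable
    apply ContinuousOn.div continuousOn_const Complex.continuous_ofReal.continuousOn
    intro y hy
    rw [uIcc_of_le hxt.le] at hy
    exact Complex.ofReal_ne_zero.mpr (ne_of_gt (lt_of_lt_of_le hx0 hy.1))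
  have hintd : IntervalIntegrable (fun u : ℝ => (s u - s x) / (u:ℂ)) volume x t := by
    have := hixt.sub hic
    simpa [sub_div] using this
  set J := ∫ u in x..t, (s u - s x) / (u:ℂ) with hJdef
  have hconst2 : (∫ u in x..t, s x / (u:ℂ)) = s x * ((Real.log t - Real.log x : ℝ) : ℂ) := by
    calc (∫ u in x..t, s x / (u:ℂ)) = ∫ u in x..t, s x * ((u:ℂ))⁻¹ := by
          simp only [div_eq_mul_inv]
      _ = s x * ∫ u in x..t, ((u:ℂ))⁻¹ := intervalIntegral.integral_const_mul _ _
      _ = s x * ((Real.log t - Real.log x : ℝ) : ℂ) := by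
          congr 1
          have heq : (fun u : ℝ => ((u : ℂ))⁻¹) = fun u : ℝ => (((u⁻¹ : ℝ)) : ℂ) := by
            funext u; rw [Complex.ofReal_inv]
          rw [heq, intervalIntegral.integral_ofReal]
          norm_cast
          rw [integral_inv_of_pos hx0 ht0, Real.log_div ht0.ne' hx0.ne']
  have hJeq : (∫ u in x..t, s u / (u:ℂ)) = J + s x * ((Real.log t - Real.log x : ℝ) : ℂ) := by
    rw [hJdef, ← hconst2, ← intervalIntegral.integral_add hintd hic]
    congr 1; funext u; ring
  have hsplitT : (∫ u in (1:ℝ)..t, s u / (u:ℂ))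
      = (∫ u in (1:ℝ)..x, s u / (u:ℂ)) + ∫ u in x..t, s u / (u:ℂ) :=
    (intervalIntegral.integral_add_adjacent_intervals hi1x hixt).symm
  have hne1 : (Real.log t : ℂ) ≠ 0 := Complex.ofReal_ne_zero.mpr hlogt0.ne'
  have hne2 : (Real.log x : ℂ) ≠ 0 := Complex.ofReal_ne_zero.mpr hlogx0.ne'
  have hid : (Real.log t)⁻¹ • (∫ u in (1:ℝ)..t, s u / (u:ℂ))
      - (Real.log x)⁻¹ • (∫ u in (1:ℝ)..x, s u / (u:ℂ))
      = (Real.log t)⁻¹ • J + ((Real.log t - Real.log x)/Real.log t)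
          • (s x - (Real.log x)⁻¹ • ∫ u in (1:ℝ)..x, s u / (u:ℂ)) := by
    rw [hsplitT, hJeq]
    set I1 := ∫ u in (1:ℝ)..x, s u / (u:ℂ)
    simp only [Complex.real_smul, smul_eq_mul]
    push_cast
    field_simp
    ring
  rw [hid]
  have hcoef2 : 0 ≤ (Real.log t - Real.log x)/Real.log t := by
    apply div_nonneg (by linarith) hlogt0.le
  have hcoef2' : (Real.log t - Real.log x)/Real.log t ≤ l - 1 := by
    rw [div_le_iff₀ hlogt0]
    nlinarith
  have hJbound : ‖J‖ ≤ ε/2 * (Real.log t - Real.log x) := by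
    have hnormint : ‖J‖ ≤ ∫ u in x..t, ‖(s u - s x)/(u:ℂ)‖ :=
      intervalIntegral.norm_integral_le_integral_norm hxt.le
    have hmono : (∫ u in x..t, ‖(s u - s x)/(u:ℂ)‖) ≤ ∫ u in x..t, (ε/2) * u⁻¹ := by
      apply intervalIntegral.integral_mono_on hxt.le hintd.norm
      · apply ContinuousOn.intervalIntegrable
        apply ContinuousOn.mul continuousOn_const
        apply ContinuousOn.inv₀ continuousOn_id
        intro y hy
        rw [uIcc_of_le hxt.le] at hy
        exact ne_of_gt (show (0:ℝ) < y from lt_of_lt_of_le hx0 hy.1)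
      · intro u hu
        have hu0 : (0:ℝ) < u := lt_of_lt_of_le hx0 hu.1
        have hb : ‖s u - s x‖ ≤ ε/2 := by
          rcases eq_or_lt_of_le hu.1 with rfl | hlt
          · rw [sub_self, norm_zero]; positivity
          · exact (h₁x u ⟨hlt, le_trans hu.2 htl1⟩).le
        calc ‖(s u - s x)/(u:ℂ)‖ = ‖s u - s x‖ / ‖((u:ℝ):ℂ)‖ := norm_div _ _
          _ = ‖s u - s x‖ / u := by
              rw [Complex.norm_real, Real.norm_eq_abs, abs_of_pos hu0]
          _ ≤ (ε/2) / u := (div_le_div_iff_of_pos_right hu0).mpr hb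
          _ = (ε/2) * u⁻¹ := div_eq_mul_inv _ _
    have hval : (∫ u in x..t, (ε/2) * u⁻¹) = ε/2 * (Real.log t - Real.log x) := by
      rw [intervalIntegral.integral_const_mul, integral_inv_of_pos hx0 ht0,
        Real.log_div ht0.ne' hx0.ne']
    linarith
  calc ‖(Real.log t)⁻¹ • J + ((Real.log t - Real.log x)/Real.log t)
          • (s x - (Real.log x)⁻¹ • ∫ u in (1:ℝ)..x, s u / (u:ℂ))‖
      ≤ ‖(Real.log t)⁻¹ • J‖ + ‖((Real.log t - Real.log x)/Real.log t)
          • (s x - (Real.log x)⁻¹ • ∫ u in (1:ℝ)..x, s u / (u:ℂ))‖ := norm_add_le _ _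
    _ ≤ (Real.log t)⁻¹ * (ε/2 * (Real.log t - Real.log x)) + (l - 1) * B := by
        apply add_le_add
        · rw [norm_smul, Real.norm_eq_abs, abs_of_pos (inv_pos.mpr hlogt0)]
          exact mul_le_mul_of_nonneg_left hJbound (inv_nonneg.mpr hlogt0.le)
        · rw [norm_smul, Real.norm_eq_abs, abs_of_nonneg hcoef2]
          exact mul_le_mul hcoef2' hBx (norm_nonneg _) (by linarith)
    _ ≤ ε/2 + ε/2 := by
        apply add_le_add
        · rw [← mul_assoc, mul_comm (Real.log t)⁻¹, mul_assoc]
          have h1 : (Real.log t)⁻¹ * (Real.log t - Real.log x) ≤ 1 := by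
            rw [inv_mul_le_iff₀ hlogt0]
            linarith
          nlinarith
        · have hll : l - 1 ≤ ε/(2*B) := by
            have := min_le_right l₁ (1 + ε/(2*B))
            rw [← hldef] at this
            linarith
          have h4 := mul_le_mul_of_nonneg_right hll hB.le
          have h5 : (ε/(2*B))*B = ε/2 := by field_simp
          linarith
    _ = ε := by ring
end

section
/- (Classical Tauberian theorem for (L,1)) If s : [1,∞) → ℝ is locally integrable, slowly decreasing with respect to logarithmic summability, and its logarithmic mean τ(t) := (1/log t)·∫₁ᵗ s(x)/x dx converges to ℓ as t → ∞, then s(x) → ℓ as x → ∞. -/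
open Filter MeasureTheory Set intervalIntegral

lemma stmt15_extract {s : ℝ → ℝ} (hsd : SlowlyDecreasingL1 s) {ε : ℝ} (hε : 0 < ε) :
    ∃ l : ℝ, 1 < l ∧ ∀ᶠ x in atTop, ∀ t ∈ Ioc x (x ^ l), -ε ≤ s t - s x := by
  have hlt : ((-ε : ℝ) : EReal) < ⨆ l ∈ Set.Ioi (1 : ℝ),
      Filter.liminf (fun x : ℝ =>
        sInf ((fun t : ℝ => ((s t - s x : ℝ) : EReal)) '' Set.Ioc x (x ^ l))) Filter.atTop := by
    refine lt_of_lt_of_le ?_ hsd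
    exact_mod_cast (by linarith : (-ε : ℝ) < 0)
  rw [lt_iSup_iff] at hlt
  obtain ⟨l, hl⟩ := hlt
  rw [lt_iSup_iff] at hl
  obtain ⟨hl1, hl⟩ := hl
  refine ⟨l, hl1, ?_⟩
  have hev := Filter.eventually_lt_of_lt_liminf hl
  filter_upwards [hev] with x hx t ht
  have hmem : ((s t - s x : ℝ) : EReal) ∈
      (fun t : ℝ => ((s t - s x : ℝ) : EReal)) '' Set.Ioc x (x ^ l) := ⟨t, ht, rfl⟩
  have := lt_of_lt_of_le hx (sInf_le hmem)
  exact_mod_cast this.le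

lemma stmt15_key_int {s : ℝ → ℝ} (hs : LocallyIntegrableOn s (Ici (1 : ℝ)))
    {a b : ℝ} (ha : 1 ≤ a) (hab : a ≤ b) :
    IntervalIntegrable (fun t => s t / t) volume a b := by
  rw [intervalIntegrable_iff_integrableOn_Icc_of_le hab]
  have hsub : Icc a b ⊆ Ici (1 : ℝ) := fun t ht => le_trans ha ht.1
  have hsint : IntegrableOn s (Icc a b) := hs.integrableOn_compact_subset hsub isCompact_Icc
  have hmeas : AEStronglyMeasurable (fun t : ℝ => t⁻¹) (volume.restrict (Icc a b)) := by
    refine ContinuousOn.aestronglyMeasurable ?_ measurableSet_Icc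
    exact continuousOn_id.inv₀ fun t ht => by
      have : (1:ℝ) ≤ t := le_trans ha ht.1
      positivity
  have hbd : ∀ᵐ t ∂(volume.restrict (Icc a b)), ‖(t : ℝ)⁻¹‖ ≤ 1 := by
    refine (ae_restrict_iff' measurableSet_Icc).mpr (Filter.Eventually.of_forall fun t ht => ?_)
    have h1 : (1:ℝ) ≤ t := le_trans ha ht.1
    rw [Real.norm_eq_abs, abs_inv, abs_of_pos (by linarith)]
    rw [inv_le_one_iff₀]
    right; exact h1
  have hint : IntegrableOn (fun t => (t : ℝ)⁻¹ * s t) (Icc a b) :=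
    hsint.bdd_mul hmeas hbd
  exact hint.congr_fun (fun t _ => (div_eq_inv_mul (s t) t).symm) measurableSet_Icc

lemma stmt15_inv_intble {a b : ℝ} (ha : 0 < a) (hab : a ≤ b) :
    IntervalIntegrable (fun t : ℝ => t⁻¹) volume a b := by
  refine ContinuousOn.intervalIntegrable_of_Icc hab ?_
  exact continuousOn_id.inv₀ fun t ht => by simp only [id]; nlinarith [ht.1]

lemma stmt15_tends_gen {s : ℝ → ℝ} {ℓ m n : ℝ} (hn : 0 < n) (hnm : n < m)
    (htau : Tendsto (fun t : ℝ => (Real.log t)⁻¹ * ∫ u in (1:ℝ)..t, s u / u) atTop (nhds ℓ)) :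
    Tendsto (fun x : ℝ => ((m - n) * Real.log x)⁻¹ *
      ((∫ u in (1:ℝ)..(x ^ m), s u / u) - ∫ u in (1:ℝ)..(x ^ n), s u / u)) atTop (nhds ℓ) := by
  set τ : ℝ → ℝ := fun t => (Real.log t)⁻¹ * ∫ u in (1:ℝ)..t, s u / u with hτ
  have hm : 0 < m := hn.trans hnm
  have hmn : m - n ≠ 0 := by linarith
  have hlim : Tendsto (fun x : ℝ => (m - n)⁻¹ * (m * τ (x ^ m) - n * τ (x ^ n)))
      atTop (nhds ((m - n)⁻¹ * (m * ℓ - n * ℓ))) := by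
    refine Tendsto.const_mul _ (Tendsto.sub ?_ ?_)
    · exact (htau.comp (tendsto_rpow_atTop hm)).const_mul m
    · exact (htau.comp (tendsto_rpow_atTop hn)).const_mul n
  have hval : (m - n)⁻¹ * (m * ℓ - n * ℓ) = ℓ := by field_simp
  rw [hval] at hlim
  refine hlim.congr' ?_
  filter_upwards [eventually_gt_atTop 1] with x hx
  have hx0 : 0 < x := by linarith
  have hlog : Real.log x ≠ 0 := ne_of_gt (Real.log_pos hx)
  have hTm : (∫ u in (1:ℝ)..(x ^ m), s u / u) = m * Real.log x * τ (x ^ m) := by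
    rw [hτ]
    simp only []
    rw [Real.log_rpow hx0]
    field_simp
  have hTn : (∫ u in (1:ℝ)..(x ^ n), s u / u) = n * Real.log x * τ (x ^ n) := by
    rw [hτ]
    simp only []
    rw [Real.log_rpow hx0]
    field_simp
  rw [hTm, hTn]
  field_simp

lemma stmt15_upper {s : ℝ → ℝ} (hs : LocallyIntegrableOn s (Ici (1 : ℝ))) {l ε x : ℝ}
    (hl : 1 < l) (hε : 0 < ε) (hx : 1 < x)
    (hbd : ∀ t ∈ Ioc x (x ^ l), -ε ≤ s t - s x) :
    s x ≤ ((l - 1) * Real.log x)⁻¹ *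
      ((∫ u in (1:ℝ)..(x ^ l), s u / u) - ∫ u in (1:ℝ)..x, s u / u) + ε := by
  have hx0 : 0 < x := by linarith
  have hab : x ≤ x ^ l := by
    calc x = x ^ (1:ℝ) := (Real.rpow_one x).symm
    _ ≤ x ^ l := Real.rpow_le_rpow_of_exponent_le hx.le hl.le
  have hpt : ∀ t ∈ Icc x (x ^ l), (s x - ε) * t⁻¹ ≤ s t / t := by
    intro t ht
    have ht0 : 0 < t := lt_of_lt_of_le hx0 ht.1
    rw [div_eq_mul_inv]
    refine mul_le_mul_of_nonneg_right ?_ (by positivity)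
    rcases eq_or_lt_of_le ht.1 with h | h
    · subst h; linarith
    · have := hbd t ⟨h, ht.2⟩; linarith
  have hint1 : IntervalIntegrable (fun t : ℝ => (s x - ε) * t⁻¹) volume x (x ^ l) :=
    (stmt15_inv_intble hx0 hab).const_mul _
  have hint2 : IntervalIntegrable (fun t => s t / t) volume x (x ^ l) :=
    stmt15_key_int hs hx.le hab
  have hmono := intervalIntegral.integral_mono_on hab hint1 hint2 hpt
  have hLHS : (∫ t in x..(x ^ l), (s x - ε) * t⁻¹) = (s x - ε) * ((l - 1) * Real.log x) := by
    rw [intervalIntegral.integral_const_mul, integral_inv_of_pos hx0 (by positivity),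
      Real.log_div (by positivity) (by positivity), Real.log_rpow hx0]
    ring
  rw [hLHS] at hmono
  have hTdiff : (∫ t in x..(x ^ l), s t / t) =
      (∫ u in (1:ℝ)..(x ^ l), s u / u) - ∫ u in (1:ℝ)..x, s u / u := by
    have h1x : IntervalIntegrable (fun t => s t / t) volume 1 x := stmt15_key_int hs le_rfl hx.le
    have := intervalIntegral.integral_add_adjacent_intervals h1x hint2
    linarith
  rw [hTdiff] at hmono
  have hc : 0 < (l - 1) * Real.log x := by
    have := Real.log_pos hx
    nlinarith
  rw [← le_div_iff₀ hc, div_eq_inv_mul] at hmono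
  linarith [hmono]

lemma stmt15_lower {s : ℝ → ℝ} (hs : LocallyIntegrableOn s (Ici (1 : ℝ))) {l ε x X : ℝ}
    (hl : 1 < l) (hε : 0 < ε) (hx : 1 < x) (hXx : X ≤ x ^ l⁻¹)
    (hbd : ∀ t, X ≤ t → ∀ u ∈ Ioc t (t ^ l), -ε ≤ s u - s t) :
    ((1 - l⁻¹) * Real.log x)⁻¹ *
      ((∫ u in (1:ℝ)..x, s u / u) - ∫ u in (1:ℝ)..(x ^ l⁻¹), s u / u) - ε ≤ s x := by
  have hx0 : 0 < x := by linarith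
  have hl0 : 0 < l := by linarith
  have hinv1 : l⁻¹ < 1 := by rw [inv_lt_one_iff₀]; right; exact hl
  set a := x ^ l⁻¹ with ha_def
  have ha1 : 1 ≤ a := by
    rw [ha_def]
    calc (1:ℝ) = x ^ (0:ℝ) := (Real.rpow_zero x).symm
    _ ≤ x ^ l⁻¹ := Real.rpow_le_rpow_of_exponent_le hx.le (by positivity)
  have hab : a ≤ x := by
    calc a ≤ x ^ (1:ℝ) := Real.rpow_le_rpow_of_exponent_le hx.le hinv1.le
    _ = x := Real.rpow_one x
  have ha0 : 0 < a := by linarith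
  have hpt : ∀ t ∈ Icc a x, s t / t - ε * t⁻¹ ≤ s x * t⁻¹ := by
    intro t ht
    have ht0 : 0 < t := lt_of_lt_of_le ha0 ht.1
    have key : s t - ε ≤ s x := by
      rcases eq_or_lt_of_le ht.2 with h | h
      · rw [h]; linarith
      · have htX : X ≤ t := le_trans hXx ht.1
        have hxtl : x ≤ t ^ l := by
          calc x = a ^ l := by
                rw [ha_def, ← Real.rpow_mul hx0.le, inv_mul_cancel₀ (ne_of_gt hl0), Real.rpow_one]
          _ ≤ t ^ l := Real.rpow_le_rpow ha0.le ht.1 hl0.le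
        have := hbd t htX x ⟨h, hxtl⟩
        linarith
    have : (s t - ε) * t⁻¹ ≤ s x * t⁻¹ :=
      mul_le_mul_of_nonneg_right key (by positivity)
    rw [div_eq_mul_inv]
    linarith [this, sub_mul (s t) ε t⁻¹]
  have hint2 : IntervalIntegrable (fun t => s t / t) volume a x := stmt15_key_int hs ha1 hab
  have hintinv : IntervalIntegrable (fun t : ℝ => t⁻¹) volume a x := stmt15_inv_intble ha0 hab
  have hint1 : IntervalIntegrable (fun t : ℝ => s t / t - ε * t⁻¹) volume a x :=
    hint2.sub (hintinv.const_mul ε)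
  have hint3 : IntervalIntegrable (fun t : ℝ => s x * t⁻¹) volume a x := hintinv.const_mul _
  have hmono := intervalIntegral.integral_mono_on hab hint1 hint3 hpt
  have hloga : Real.log a = l⁻¹ * Real.log x := by rw [ha_def, Real.log_rpow hx0]
  have hlogdiff : Real.log (x / a) = (1 - l⁻¹) * Real.log x := by
    rw [Real.log_div (by positivity) (by positivity), hloga]; ring
  have hI3 : (∫ t in a..x, s x * t⁻¹) = s x * ((1 - l⁻¹) * Real.log x) := by
    rw [intervalIntegral.integral_const_mul, integral_inv_of_pos ha0 hx0, hlogdiff]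
  have hI1 : (∫ t in a..x, (s t / t - ε * t⁻¹)) =
      ((∫ u in (1:ℝ)..x, s u / u) - ∫ u in (1:ℝ)..a, s u / u)
        - ε * ((1 - l⁻¹) * Real.log x) := by
    rw [intervalIntegral.integral_sub hint2 (hintinv.const_mul ε),
      intervalIntegral.integral_const_mul, integral_inv_of_pos ha0 hx0, hlogdiff]
    have h1a : IntervalIntegrable (fun t => s t / t) volume 1 a := stmt15_key_int hs le_rfl ha1
    have := intervalIntegral.integral_add_adjacent_intervals h1a hint2
    linarith
  rw [hI1, hI3] at hmono
  have hc : 0 < (1 - l⁻¹) * Real.log x := by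
    have := Real.log_pos hx
    nlinarith
  have h2 : ((∫ u in (1:ℝ)..x, s u / u) - ∫ u in (1:ℝ)..a, s u / u) ≤
      (s x + ε) * ((1 - l⁻¹) * Real.log x) := by nlinarith [hmono]
  have h3 := (div_le_iff₀ hc).mpr h2
  rw [div_eq_inv_mul] at h3
  linarith

theorem stmt15 (s : ℝ → ℝ) (ℓ : ℝ)
    (hs : LocallyIntegrableOn s (Ici (1 : ℝ)))
    (hsd : SlowlyDecreasingL1 s)
    (htau : Tendsto (fun t : ℝ => (Real.log t)⁻¹ * ∫ x in (1 : ℝ)..t, s x / x)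
      atTop (nhds ℓ)) :
    Tendsto s atTop (nhds ℓ) := by
  rw [Metric.tendsto_nhds]
  intro ε hε
  have hε2 : 0 < ε / 2 := by linarith
  obtain ⟨l, hl1, hev⟩ := stmt15_extract hsd hε2
  have hl0 : 0 < l := by linarith
  have hlinv : 0 < l⁻¹ := by positivity
  have hlinv1 : l⁻¹ < 1 := by rw [inv_lt_one_iff₀]; right; exact hl1
  rw [eventually_atTop] at hev
  obtain ⟨X, hX⟩ := hev
  -- the two averaged means
  have hg : Tendsto (fun x : ℝ => ((l - 1) * Real.log x)⁻¹ *
      ((∫ u in (1:ℝ)..(x ^ l), s u / u) - ∫ u in (1:ℝ)..x, s u / u)) atTop (nhds ℓ) := by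
    have := stmt15_tends_gen (s := s) (ℓ := ℓ) (m := l) (n := 1) one_pos hl1 htau
    simpa [Real.rpow_one] using this
  have hh : Tendsto (fun x : ℝ => ((1 - l⁻¹) * Real.log x)⁻¹ *
      ((∫ u in (1:ℝ)..x, s u / u) - ∫ u in (1:ℝ)..(x ^ l⁻¹), s u / u)) atTop (nhds ℓ) := by
    have := stmt15_tends_gen (s := s) (ℓ := ℓ) (m := 1) (n := l⁻¹) hlinv hlinv1 htau
    simpa [Real.rpow_one] using this
  have hgd := (Metric.tendsto_nhds.mp hg) (ε / 2) hε2
  have hhd := (Metric.tendsto_nhds.mp hh) (ε / 2) hε2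
  have haX : ∀ᶠ x : ℝ in atTop, X ≤ x ^ l⁻¹ :=
    (tendsto_rpow_atTop hlinv).eventually_ge_atTop X
  filter_upwards [eventually_gt_atTop 1, eventually_ge_atTop X, haX, hgd, hhd]
    with x hx1 hxX hxa hgx hhx
  have hup := stmt15_upper hs hl1 hε2 hx1 (hX x hxX)
  have hlo := stmt15_lower hs hl1 hε2 hx1 hxa (fun t ht u hu => hX t ht u hu)
  rw [Real.dist_eq, abs_sub_lt_iff] at hgx hhx ⊢
  constructor
  · linarith [hgx.1]
  · linarith [hhx.2]
end

section
/- (Classical Tauberian theorem for (L,1), two-sided) If s : [1,∞) → ℂ is locally integrable, slowly oscillating with respect to logarithmic summability, and τ(t) := (1/log t)·∫₁ᵗ s(x)/x dx converges to ℓ as t → ∞, then s(x) → ℓ as x → ∞. -/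
open Filter MeasureTheory Set intervalIntegral

theorem stmt16 (s : ℝ → ℂ) (ℓ : ℂ)
    (hs : LocallyIntegrableOn s (Ici (1 : ℝ)))
    (hso : SlowlyOscillatingL1 s)
    (htau : Tendsto (fun t : ℝ => (Real.log t)⁻¹ • ∫ x in (1 : ℝ)..t, s x / (x : ℂ))
      atTop (nhds ℓ)) :
    Tendsto s atTop (nhds ℓ) := by
  set τ : ℝ → ℂ := fun t : ℝ => (Real.log t)⁻¹ • ∫ x in (1 : ℝ)..t, s x / (x : ℂ) with hτ
  unfold SlowlyOscillatingL1 at hso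
  -- integrability of u ↦ s u / u on intervals contained in [1, ∞)
  have hint : ∀ a b : ℝ, 1 ≤ a → 1 ≤ b →
      IntervalIntegrable (fun u : ℝ => s u / (u : ℂ)) volume a b := by
    intro a b ha hb
    have h1 : Set.uIcc a b ⊆ Set.Ici (1 : ℝ) := by
      intro u hu
      rw [Set.mem_uIcc] at hu
      rcases hu with ⟨h1, h2⟩ | ⟨h1, h2⟩ <;> simp only [Set.mem_Ici] <;> linarith
    have hsi : IntegrableOn s (Set.uIcc a b) volume :=
      hs.integrableOn_compact_subset h1 isCompact_uIcc
    have hm : AEStronglyMeasurable (fun u : ℝ => ((u : ℝ) : ℂ)⁻¹)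
        (volume.restrict (Set.uIcc a b)) := by
      have hmeas : Measurable fun u : ℝ => ((u : ℝ) : ℂ)⁻¹ := by
        have : (fun u : ℝ => ((u : ℝ) : ℂ)⁻¹) = fun u : ℝ => ((u⁻¹ : ℝ) : ℂ) := by
          ext u; exact (Complex.ofReal_inv u).symm
        rw [this]
        exact Complex.measurable_ofReal.comp measurable_inv
      exact hmeas.aestronglyMeasurable
    have hbound : ∀ᵐ u ∂(volume.restrict (Set.uIcc a b)), ‖((u : ℝ) : ℂ)⁻¹‖ ≤ 1 := by
      filter_upwards [ae_restrict_mem measurableSet_uIcc] with u hu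
      have h1u : (1 : ℝ) ≤ u := h1 hu
      rw [norm_inv, Complex.norm_real, Real.norm_eq_abs, abs_of_pos (by linarith)]
      rw [inv_le_one_iff₀]
      right; linarith
    have hprod : Integrable (fun u : ℝ => ((u : ℝ) : ℂ)⁻¹ * s u)
        (volume.restrict (Set.uIcc a b)) := Integrable.bdd_mul hsi hm hbound
    have h2 : IntegrableOn (fun u : ℝ => s u / (u : ℂ)) (Set.uIcc a b) volume := by
      simpa [div_eq_mul_inv, mul_comm, IntegrableOn] using hprod
    rw [intervalIntegrable_iff]
    exact h2.mono_set Set.uIoc_subset_uIcc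
  rw [Metric.tendsto_nhds]
  intro ε hε
  have hε6 : 0 < ε / 6 := by linarith
  -- choose l > 1 with small limsup of oscillation
  have hso' : (⨅ l ∈ Set.Ioi (1 : ℝ),
      Filter.limsup (fun x : ℝ =>
        sSup ((fun t : ℝ => ((‖s t - s x‖ : ℝ) : EReal)) '' Set.Ioc x (x ^ l)))
        Filter.atTop) < ((ε / 6 : ℝ) : EReal) := by
    rw [hso]
    exact_mod_cast EReal.coe_pos.mpr hε6
  simp only [iInf_lt_iff] at hso'
  obtain ⟨l, hlmem, hl6⟩ := hso'
  have hl1 : (1 : ℝ) < l := hlmem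
  have hev : ∀ᶠ x : ℝ in atTop,
      sSup ((fun t : ℝ => ((‖s t - s x‖ : ℝ) : EReal)) '' Set.Ioc x (x ^ l))
        < ((ε / 6 : ℝ) : EReal) := eventually_lt_of_limsup_lt hl6
  -- the de la Vallée Poussin means converge to ℓ
  have hl0 : ((l : ℂ) - 1) ≠ 0 := by
    rw [sub_ne_zero]
    exact_mod_cast hl1.ne'
  have hpow : Tendsto (fun x : ℝ => x ^ l) atTop atTop := tendsto_rpow_atTop (by linarith)
  have hgl : Tendsto (fun x : ℝ => ((l : ℂ) * τ (x ^ l) - τ x) / ((l : ℂ) - 1))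
      atTop (nhds ℓ) := by
    have h1 : Tendsto (fun x : ℝ => (l : ℂ) * τ (x ^ l) - τ x) atTop
        (nhds ((l : ℂ) * ℓ - ℓ)) := ((htau.comp hpow).const_mul _).sub htau
    have h2 := h1.div_const ((l : ℂ) - 1)
    have h3 : ((l : ℂ) * ℓ - ℓ) / ((l : ℂ) - 1) = ℓ := by
      field_simp
    rwa [h3] at h2
  -- main estimate
  have key : ∀ᶠ x : ℝ in atTop,
      dist (s x) (((l : ℂ) * τ (x ^ l) - τ x) / ((l : ℂ) - 1)) ≤ ε / 6 := by
    filter_upwards [hev, eventually_gt_atTop (1 : ℝ)] with x hFx hx1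
    set y := x ^ l with hy
    have hx0 : (0 : ℝ) < x := by linarith
    have hxy : x < y := by
      calc x = x ^ (1 : ℝ) := (Real.rpow_one x).symm
        _ < x ^ l := (Real.rpow_lt_rpow_left_iff hx1).mpr hl1
    have hy1 : (1 : ℝ) < y := hx1.trans hxy
    have hlx : 0 < Real.log x := Real.log_pos hx1
    have hlogy : Real.log y = l * Real.log x := Real.log_rpow hx0 l
    have hbd : ∀ t ∈ Set.Ioc x y, ‖s t - s x‖ ≤ ε / 6 := by
      intro t ht
      have h1 : ((‖s t - s x‖ : ℝ) : EReal) ≤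
          sSup ((fun t : ℝ => ((‖s t - s x‖ : ℝ) : EReal)) '' Set.Ioc x y) :=
        le_sSup (Set.mem_image_of_mem _ ht)
      have h2 := lt_of_le_of_lt h1 hFx
      exact_mod_cast h2.le
    -- integrals
    have hIy : IntervalIntegrable (fun u : ℝ => s u / (u : ℂ)) volume 1 y :=
      hint 1 y le_rfl hy1.le
    have hIx : IntervalIntegrable (fun u : ℝ => s u / (u : ℂ)) volume 1 x :=
      hint 1 x le_rfl hx1.le
    have hIxy : IntervalIntegrable (fun u : ℝ => s u / (u : ℂ)) volume x y :=
      hint x y hx1.le hy1.le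
    have hTdiff : (∫ u in (1:ℝ)..y, s u / (u : ℂ)) - (∫ u in (1:ℝ)..x, s u / (u : ℂ))
        = ∫ u in x..y, s u / (u : ℂ) := integral_interval_sub_left hIy hIx
    have h0uIcc : (0 : ℝ) ∉ Set.uIcc x y := Set.notMem_uIcc_of_lt hx0 (hx0.trans hxy)
    have hrinv : (∫ u in x..y, u⁻¹) = (l - 1) * Real.log x := by
      rw [integral_inv h0uIcc, Real.log_div (by positivity) (by positivity), hlogy]
      ring
    have hinv : (∫ u in x..y, ((u : ℝ) : ℂ)⁻¹) = (((l - 1) * Real.log x : ℝ) : ℂ) := by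
      calc (∫ u in x..y, ((u : ℝ) : ℂ)⁻¹) = ∫ u in x..y, ((u⁻¹ : ℝ) : ℂ) := by
            simp [Complex.ofReal_inv]
        _ = ((∫ u in x..y, u⁻¹ : ℝ) : ℂ) := intervalIntegral.integral_ofReal
        _ = (((l - 1) * Real.log x : ℝ) : ℂ) := by rw [hrinv]
    have hIinv : IntervalIntegrable (fun u : ℝ => ((u : ℝ) : ℂ)⁻¹) volume x y := by
      apply ContinuousOn.intervalIntegrable
      intro u hu
      have hu0 : u ≠ 0 := fun h => h0uIcc (h ▸ hu)
      exact ((Complex.continuous_ofReal.continuousAt).continuousWithinAt.inv₀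
        (by exact_mod_cast hu0))
    have hc : (∫ u in x..y, s x / (u : ℂ)) = s x * (((l - 1) * Real.log x : ℝ) : ℂ) := by
      simp_rw [div_eq_mul_inv]
      rw [intervalIntegral.integral_const_mul, hinv]
    -- norm bound on the oscillation integral
    have hdiff : (∫ u in x..y, s u / (u : ℂ)) - s x * (((l - 1) * Real.log x : ℝ) : ℂ)
        = ∫ u in x..y, (s u - s x) / (u : ℂ) := by
      rw [← hc, ← intervalIntegral.integral_sub hIxy]
      · simp [sub_div]
      · simp_rw [div_eq_mul_inv]
        exact hIinv.const_mul (s x)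
    have hC : (0 : ℝ) < (l - 1) * Real.log x := mul_pos (by linarith) hlx
    have hgb : IntervalIntegrable (fun u : ℝ => (ε / 6) * u⁻¹) volume x y := by
      apply ContinuousOn.intervalIntegrable
      exact continuousOn_const.mul (continuousOn_inv₀.mono fun u hu =>
        fun h => h0uIcc (h ▸ hu))
    have hnorm : ‖∫ u in x..y, (s u - s x) / (u : ℂ)‖ ≤ (ε / 6) * ((l - 1) * Real.log x) := by
      have hbd' : ∀ᵐ t ∂(volume.restrict (Set.uIoc x y)),
          ‖(s t - s t) / (t : ℂ)‖ ≤ 0 := by exact Filter.Eventually.of_forall (by simp)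
      have h := intervalIntegral.norm_integral_le_abs_of_norm_le (μ := volume)
        (f := fun u : ℝ => (s u - s x) / (u : ℂ)) (g := fun u : ℝ => (ε / 6) * u⁻¹)
        (a := x) (b := y) ?_ hgb
      · calc ‖∫ u in x..y, (s u - s x) / (u : ℂ)‖ ≤ |∫ u in x..y, (ε / 6) * u⁻¹| := h
          _ = (ε / 6) * ((l - 1) * Real.log x) := by
              rw [intervalIntegral.integral_const_mul, hrinv, abs_of_nonneg (mul_nonneg hε6.le hC.le)]
      · filter_upwards [ae_restrict_mem measurableSet_uIoc] with t ht
        rw [Set.uIoc_of_le hxy.le] at ht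
        have ht0 : (0 : ℝ) < t := lt_trans hx0 ht.1
        have habs : ‖s t - s x‖ ≤ ε / 6 := hbd t ht
        rw [norm_div, Complex.norm_real, Real.norm_eq_abs, abs_of_pos ht0,
          div_eq_mul_inv]
        exact mul_le_mul_of_nonneg_right habs (by positivity)
    -- rewrite the distance
    have hlogx0 : (Real.log x : ℂ) ≠ 0 := by exact_mod_cast hlx.ne'
    have hC0 : ((((l - 1) * Real.log x : ℝ)) : ℂ) ≠ 0 := by exact_mod_cast hC.ne'
    have hlogy0 : Real.log y ≠ 0 := by rw [hlogy]; positivity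
    have hTy : (∫ u in (1:ℝ)..y, s u / (u : ℂ)) = ((Real.log y : ℝ) : ℂ) * τ y := by
      simp only [hτ, Complex.real_smul]
      rw [← mul_assoc, ← Complex.ofReal_mul, mul_inv_cancel₀ hlogy0]
      simp
    have hTx : (∫ u in (1:ℝ)..x, s u / (u : ℂ)) = ((Real.log x : ℝ) : ℂ) * τ x := by
      simp only [hτ, Complex.real_smul]
      rw [← mul_assoc, ← Complex.ofReal_mul, mul_inv_cancel₀ hlx.ne']
      simp
    have heq : s x - ((l : ℂ) * τ y - τ x) / ((l : ℂ) - 1)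
        = (s x * (((l - 1) * Real.log x : ℝ) : ℂ) - ∫ u in x..y, s u / (u : ℂ))
          / ((((l - 1) * Real.log x : ℝ)) : ℂ) := by
      rw [← hTdiff, hTy, hTx]
      have hly : ((Real.log y : ℝ) : ℂ) = (l : ℂ) * ((Real.log x : ℝ) : ℂ) := by
        exact_mod_cast congrArg (Complex.ofReal) hlogy
      rw [hly]
      push_cast
      field_simp
    rw [Complex.dist_eq, heq, norm_div, Complex.norm_real, Real.norm_eq_abs, abs_of_pos hC]
    rw [div_le_iff₀ hC]
    calc ‖s x * (((l - 1) * Real.log x : ℝ) : ℂ) - ∫ u in x..y, s u / (u : ℂ)‖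
        = ‖∫ u in x..y, (s u - s x) / (u : ℂ)‖ := by
          rw [← hdiff, ← norm_sub_rev]
      _ ≤ (ε / 6) * ((l - 1) * Real.log x) := hnorm
  -- conclusion
  have hg2 := Metric.tendsto_nhds.mp hgl (ε / 2) (by linarith)
  filter_upwards [key, hg2] with x h1 h2
  calc dist (s x) ℓ ≤ dist (s x) (((l : ℂ) * τ (x ^ l) - τ x) / ((l : ℂ) - 1))
        + dist (((l : ℂ) * τ (x ^ l) - τ x) / ((l : ℂ) - 1)) ℓ := dist_triangle _ _ _
    _ < ε := by linarith
end

section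
/- (Main theorem, one-sided) If s : [1,∞) → ℝ is locally integrable, slowly decreasing with respect to logarithmic summability, and the statistical limit st-lim_{t→∞} τ(t) = ℓ of its logarithmic mean τ(t) := (1/log t)·∫₁ᵗ s(x)/x dx exists, then the ordinary limit lim_{x→∞} s(x) = ℓ exists. -/
open Filter MeasureTheory Set intervalIntegral

namespace Stmt17Aux

noncomputable def tau (s : ℝ → ℝ) (t : ℝ) : ℝ :=
  (Real.log t)⁻¹ * ∫ x in (1:ℝ)..t, s x / x

variable {s : ℝ → ℝ}

lemma intInt (hs : LocallyIntegrableOn s (Ici (1 : ℝ))) {a b : ℝ} (ha : 1 ≤ a) (hab : a ≤ b) :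
    IntervalIntegrable (fun u => s u / u) volume a b := by
  have h0 : (0:ℝ) < a := lt_of_lt_of_le one_pos ha
  have hsub : Icc a b ⊆ Ici (1:ℝ) := fun x hx => le_trans ha hx.1
  have h1 : IntegrableOn s (Icc a b) volume :=
    hs.integrableOn_compact_subset hsub isCompact_Icc
  have h2 : ContinuousOn (fun u : ℝ => u⁻¹) (Icc a b) := by
    apply ContinuousOn.inv₀ continuousOn_id
    intro x hx; exact ne_of_gt (lt_of_lt_of_le h0 hx.1)
  have h3 : IntegrableOn (fun u => s u * u⁻¹) (Icc a b) volume :=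
    h1.mul_continuousOn h2 isCompact_Icc
  rw [intervalIntegrable_iff_integrableOn_Icc_of_le hab]
  simpa [div_eq_mul_inv] using h3

lemma logmul {t : ℝ} (ht : 1 < t) :
    Real.log t * tau s t = ∫ x in (1:ℝ)..t, s x / x := by
  have h : Real.log t ≠ 0 := ne_of_gt (Real.log_pos ht)
  unfold tau
  field_simp

lemma diff (hs : LocallyIntegrableOn s (Ici (1 : ℝ))) {a b : ℝ} (ha : 1 < a) (hab : a ≤ b) :
    Real.log b * tau s b - Real.log a * tau s a = ∫ u in a..b, s u / u := by
  rw [logmul (lt_of_lt_of_le ha hab), logmul ha]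
  exact integral_interval_sub_left (intInt hs le_rfl (by linarith)) (intInt hs le_rfl ha.le)

lemma constInt {a b m : ℝ} (h0a : 0 < a) (h0b : 0 < b) :
    ∫ u in a..b, m / u = m * (Real.log b - Real.log a) := by
  simp only [div_eq_mul_inv]
  rw [intervalIntegral.integral_const_mul, integral_inv_of_pos h0a h0b,
    Real.log_div (ne_of_gt h0b) (ne_of_gt h0a)]

lemma lowerBound (hs : LocallyIntegrableOn s (Ici (1 : ℝ))) {a b m : ℝ} (ha : 1 < a) (hab : a < b)
    (hm : ∀ t ∈ Ioc a b, m ≤ s t) :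
    m * (Real.log b - Real.log a) ≤ ∫ u in a..b, s u / u := by
  have h0a : (0:ℝ) < a := by linarith
  have h0b : (0:ℝ) < b := by linarith
  have hint : IntervalIntegrable (fun u => s u / u) volume a b := intInt hs ha.le hab.le
  have hconst : IntervalIntegrable (fun u : ℝ => m / u) volume a b := by
    apply ContinuousOn.intervalIntegrable
    apply ContinuousOn.div continuousOn_const continuousOn_id
    intro x hx
    rw [uIcc_of_le hab.le] at hx
    exact ne_of_gt (lt_of_lt_of_le h0a hx.1)
  have key : ∫ u in a..b, m / u ≤ ∫ u in a..b, s u / u := by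
    rw [integral_of_le hab.le, integral_of_le hab.le]
    apply setIntegral_mono_on hconst.1 hint.1 measurableSet_Ioc
    intro x hx
    have hx0 : (0:ℝ) < x := lt_trans h0a hx.1
    exact div_le_div_of_nonneg_right (hm x hx) hx0.le
  calc m * (Real.log b - Real.log a) = ∫ u in a..b, m / u := (constInt h0a h0b).symm
    _ ≤ _ := key

lemma upperBound (hs : LocallyIntegrableOn s (Ici (1 : ℝ))) {a b M : ℝ} (ha : 1 < a) (hab : a < b)
    (hm : ∀ t ∈ Ioc a b, s t ≤ M) :
    (∫ u in a..b, s u / u) ≤ M * (Real.log b - Real.log a) := by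
  have h0a : (0:ℝ) < a := by linarith
  have h0b : (0:ℝ) < b := by linarith
  have hint : IntervalIntegrable (fun u => s u / u) volume a b := intInt hs ha.le hab.le
  have hconst : IntervalIntegrable (fun u : ℝ => M / u) volume a b := by
    apply ContinuousOn.intervalIntegrable
    apply ContinuousOn.div continuousOn_const continuousOn_id
    intro x hx
    rw [uIcc_of_le hab.le] at hx
    exact ne_of_gt (lt_of_lt_of_le h0a hx.1)
  have key : ∫ u in a..b, s u / u ≤ ∫ u in a..b, M / u := by
    rw [integral_of_le hab.le, integral_of_le hab.le]
    apply setIntegral_mono_on hint.1 hconst.1 measurableSet_Ioc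
    intro x hx
    have hx0 : (0:ℝ) < x := lt_trans h0a hx.1
    exact div_le_div_of_nonneg_right (hm x hx) hx0.le
  calc (∫ u in a..b, s u / u) ≤ ∫ u in a..b, M / u := key
    _ = M * (Real.log b - Real.log a) := constInt h0a h0b

lemma sd_extract (hsd : SlowlyDecreasingL1 s) {ε : ℝ} (hε : 0 < ε) :
    ∃ l : ℝ, 1 < l ∧ ∀ᶠ x : ℝ in atTop, ∀ t ∈ Ioc x (x ^ l), s x - ε ≤ s t := by
  have h0 : ((-ε : ℝ) : EReal) < 0 := by
    rw [show ((0:EReal)) = ((0:ℝ):EReal) from rfl, EReal.coe_lt_coe_iff]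
    linarith
  have h1 := lt_of_lt_of_le h0 hsd
  rw [lt_iSup_iff] at h1
  obtain ⟨l, hl⟩ := h1
  rw [lt_iSup_iff] at hl
  obtain ⟨hl1, hl2⟩ := hl
  refine ⟨l, hl1, ?_⟩
  have h2 := Filter.eventually_lt_of_lt_liminf hl2
  filter_upwards [h2] with x hx t ht
  have h3 : ((-ε : ℝ) : EReal) < ((s t - s x : ℝ) : EReal) :=
    lt_of_lt_of_le hx (sInf_le ⟨t, ht, rfl⟩)
  rw [EReal.coe_lt_coe_iff] at h3
  linarith

lemma good_points {τ : ℝ → ℝ} {ℓ : ℝ} (hst : StatLimR τ ℓ) {δ : ℝ} (hδ : 0 < δ)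
    {p q : ℝ} (hp : 0 < p) (hpq : p < q) :
    ∀ᶠ x : ℝ in atTop, ∃ t, t ∈ Ioc (x ^ p) (x ^ q) ∧ |τ t - ℓ| ≤ δ := by
  by_contra hcon
  rw [Filter.not_eventually] at hcon
  have hcon' : ∃ᶠ x : ℝ in atTop, ∀ t ∈ Ioc (x ^ p) (x ^ q), δ < |τ t - ℓ| := by
    apply hcon.mono
    intro x hx t ht
    by_contra h
    exact hx ⟨t, ht, le_of_not_gt h⟩
  have hq : 0 < q := lt_trans hp hpq
  have hE1 : ∀ᶠ x : ℝ in atTop,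
      (volume {t : ℝ | t ∈ Ioo (1:ℝ) (x ^ q + 1) ∧ δ < |τ t - ℓ|}).toReal / (x ^ q + 1 - 1)
        < 1/2 := by
    have htend : Tendsto (fun x : ℝ => x ^ q + 1) atTop atTop :=
      tendsto_atTop_add_const_right _ 1 (tendsto_rpow_atTop hq)
    exact htend.eventually ((hst δ hδ).eventually_lt_const (by norm_num))
  have hE2 : ∀ᶠ x : ℝ in atTop, x ^ (p - q) ≤ 1/2 := by
    have : Tendsto (fun x : ℝ => x ^ (p - q)) atTop (nhds 0) := by
      simpa using tendsto_rpow_neg_atTop (y := q - p) (by linarith)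
    exact this.eventually_le_const (by norm_num) |>.mono (fun x hx => hx)
  have hE3 : ∀ᶠ x : ℝ in atTop, (1:ℝ) < x := eventually_gt_atTop 1
  obtain ⟨x, hbad, hx1, hx2, hx3⟩ := (hcon'.and_eventually (hE1.and (hE2.and hE3))).exists
  have hx0 : (0:ℝ) < x := lt_trans one_pos hx3
  have hxp1 : (1:ℝ) < x ^ p := Real.one_lt_rpow_iff_of_pos hx0 |>.2 (Or.inl ⟨hx3, hp⟩)
  have hxpq : x ^ p < x ^ q := Real.rpow_lt_rpow_of_exponent_lt hx3 hpq
  have hxq1 : (1:ℝ) < x ^ q := lt_trans hxp1 hxpq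
  have hhalf : x ^ p ≤ x ^ q / 2 := by
    have h : x ^ p = x ^ q * x ^ (p - q) := by
      rw [← Real.rpow_add hx0]; ring_nf
    rw [h]
    calc x ^ q * x ^ (p - q) ≤ x ^ q * (1/2) := by
          apply mul_le_mul_of_nonneg_left hx2 (le_of_lt (lt_trans one_pos hxq1))
      _ = x ^ q / 2 := by ring
  set S := {t : ℝ | t ∈ Ioo (1:ℝ) (x ^ q + 1) ∧ δ < |τ t - ℓ|} with hS
  have hsub : Ioc (x ^ p) (x ^ q) ⊆ S := by
    intro t ht
    refine ⟨⟨lt_trans hxp1 ht.1, by linarith [ht.2]⟩, hbad t ht⟩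
  have hSfin : volume S ≤ ENNReal.ofReal (x ^ q + 1 - 1) := by
    calc volume S ≤ volume (Ioo (1:ℝ) (x ^ q + 1)) := measure_mono (fun t ht => ht.1)
      _ = ENNReal.ofReal (x ^ q + 1 - 1) := Real.volume_Ioo
  have hlow : x ^ q - x ^ p ≤ (volume S).toReal := by
    have h1 : ENNReal.ofReal (x ^ q - x ^ p) ≤ volume S := by
      rw [← Real.volume_Ioc]
      exact measure_mono hsub
    have h2 : volume S ≠ ⊤ :=
      ne_top_of_le_ne_top (by simp) hSfin
    calc x ^ q - x ^ p = (ENNReal.ofReal (x ^ q - x ^ p)).toReal :=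
          (ENNReal.toReal_ofReal (by linarith)).symm
      _ ≤ (volume S).toReal := ENNReal.toReal_mono h2 h1
  have hxqpos : (0:ℝ) < x ^ q := lt_trans one_pos hxq1
  have hfin : (1:ℝ)/2 ≤ (volume S).toReal / (x ^ q + 1 - 1) := by
    rw [show x ^ q + 1 - 1 = x ^ q by ring]
    rw [le_div_iff₀ hxqpos]
    calc 1/2 * x ^ q = x ^ q - x ^ q / 2 := by ring
      _ ≤ x ^ q - x ^ p := by linarith
      _ ≤ (volume S).toReal := hlow
  rw [hS] at hx1
  linarith

end Stmt17Aux

open Stmt17Aux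

set_option maxHeartbeats 1600000

theorem stmt17 (s : ℝ → ℝ) (ℓ : ℝ)
    (hs : LocallyIntegrableOn s (Ici (1 : ℝ)))
    (hsd : SlowlyDecreasingL1 s)
    (hst : StatLimR (fun t : ℝ => (Real.log t)⁻¹ * ∫ x in (1 : ℝ)..t, s x / x) ℓ) :
    Tendsto s atTop (nhds ℓ) := by
  have hst' : StatLimR (tau s) ℓ := hst
  rw [Metric.tendsto_atTop]
  intro ε hε
  have key : ∀ᶠ x : ℝ in atTop, |s x - ℓ| < ε := by
    obtain ⟨ε', hε'def⟩ : ∃ e : ℝ, e = ε / 3 := ⟨_, rfl⟩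
    have hε' : 0 < ε' := by rw [hε'def]; positivity
    obtain ⟨l, hl, hsdl⟩ := sd_extract hsd hε'
    obtain ⟨X, hX⟩ := eventually_atTop.1 hsdl
    have hl0 : l ≠ 0 := by linarith
    -- upper-side parameters
    obtain ⟨q1, hq1def⟩ : ∃ q : ℝ, q = 1 + (l - 1) / 3 := ⟨_, rfl⟩
    obtain ⟨q2, hq2def⟩ : ∃ q : ℝ, q = 1 + 2 * (l - 1) / 3 := ⟨_, rfl⟩
    obtain ⟨δu, hδudef⟩ : ∃ q : ℝ, q = ε' * (l - 1) / (6 * l) := ⟨_, rfl⟩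
    have hδu : 0 < δu := by
      rw [hδudef]; apply div_pos (mul_pos hε' (by linarith)) (by linarith)
    have hq1 : 1 < q1 := by rw [hq1def]; linarith
    have hq12 : q1 < q2 := by rw [hq1def, hq2def]; linarith
    have hq2l : q2 < l := by rw [hq2def]; linarith
    have hq1l : q1 ≤ l := by linarith
    -- lower-side parameters
    obtain ⟨d, hddef⟩ : ∃ q : ℝ, q = (1 - 1/l) / 4 := ⟨_, rfl⟩
    have hlinv : 1/l < 1 := by rw [div_lt_one (by linarith)]; linarith
    have hlinv0 : 0 < 1/l := by positivity
    have hd : 0 < d := by rw [hddef]; linarith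
    obtain ⟨p1, hp1def⟩ : ∃ q : ℝ, q = 1/l + d := ⟨_, rfl⟩
    obtain ⟨p2, hp2def⟩ : ∃ q : ℝ, q = 1/l + 2*d := ⟨_, rfl⟩
    obtain ⟨p3, hp3def⟩ : ∃ q : ℝ, q = 1/l + 3*d := ⟨_, rfl⟩
    have hp1 : 0 < p1 := by rw [hp1def]; linarith
    have hp12 : p1 < p2 := by rw [hp1def, hp2def]; linarith
    have hp23 : p2 < p3 := by rw [hp2def, hp3def]; linarith
    have hp31 : p3 < 1 := by rw [hp3def, hddef]; linarith
    have hp21 : p2 ≤ 1 := by linarith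
    obtain ⟨δd, hδddef⟩ : ∃ q : ℝ, q = ε' * d / 2 := ⟨_, rfl⟩
    have hδd : 0 < δd := by rw [hδddef]; positivity
    have hp1l : 1 ≤ p1 * l := by
      rw [hp1def, add_mul, one_div, inv_mul_cancel₀ hl0]
      nlinarith [mul_pos hd (lt_trans one_pos hl)]
    -- good points
    have gU1 := good_points hst' hδu one_pos hq1
    have gU2 := good_points hst' hδu (by linarith : (0:ℝ) < q2) hq2l
    have gL1 := good_points hst' hδd hp1 hp12
    have gL2 := good_points hst' hδd (by linarith : (0:ℝ) < p3) hp31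
    filter_upwards [eventually_gt_atTop 1, eventually_ge_atTop X,
      (tendsto_rpow_atTop hp1).eventually_ge_atTop X, gU1, gU2, gL1, gL2] with x hx1 hxX hxp1X
      hgU1 hgU2 hgL1 hgL2
    have hx0 : (0:ℝ) < x := lt_trans one_pos hx1
    have hG : 0 < Real.log x := Real.log_pos hx1
    -- ===== upper bound =====
    obtain ⟨a, ⟨ha1, ha2⟩, hτa⟩ := hgU1
    rw [Real.rpow_one] at ha1
    obtain ⟨b, ⟨hb1, hb2⟩, hτb⟩ := hgU2
    have hxa : 1 < a := lt_trans hx1 ha1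
    have hq1q2 : x ^ q1 < x ^ q2 := Real.rpow_lt_rpow_of_exponent_lt hx1 hq12
    have hab : a < b := lt_of_le_of_lt ha2 (lt_of_lt_of_le hq1q2 hb1.le)
    have hm : ∀ t ∈ Ioc a b, s x - ε' ≤ s t := by
      intro t ht
      exact hX x hxX t ⟨lt_trans ha1 ht.1, le_trans ht.2 hb2⟩
    have hI := lowerBound hs hxa hab hm
    rw [← diff hs hxa hab.le] at hI
    have hLa0 : 0 < Real.log a := Real.log_pos hxa
    have hLb0 : 0 < Real.log b := Real.log_pos (lt_trans hxa hab)
    have hLaU : Real.log a ≤ q1 * Real.log x := by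
      calc Real.log a ≤ Real.log (x ^ q1) := Real.log_le_log (by linarith) ha2
        _ = q1 * Real.log x := Real.log_rpow hx0 _
    have hLbU : Real.log b ≤ l * Real.log x := by
      calc Real.log b ≤ Real.log (x ^ l) := Real.log_le_log (by linarith) hb2
        _ = l * Real.log x := Real.log_rpow hx0 _
    have hLbL : q2 * Real.log x < Real.log b := by
      calc q2 * Real.log x = Real.log (x ^ q2) := (Real.log_rpow hx0 _).symm
        _ < Real.log b := Real.log_lt_log (by positivity) hb1
    have hgapU : (l - 1)/3 * Real.log x ≤ Real.log b - Real.log a := by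
      have e0 : (l - 1)/3 * Real.log x = q2 * Real.log x - q1 * Real.log x := by
        rw [hq1def, hq2def]; ring
      linarith
    have hgapU0 : 0 < Real.log b - Real.log a :=
      lt_of_lt_of_le (mul_pos (by linarith) hG) hgapU
    have habsa := abs_le.1 hτa
    have habsb := abs_le.1 hτb
    have i1 : Real.log b * tau s b ≤ Real.log b * (ℓ + δu) :=
      mul_le_mul_of_nonneg_left (by linarith [habsb.2]) hLb0.le
    have i2 : Real.log a * (ℓ - δu) ≤ Real.log a * tau s a :=
      mul_le_mul_of_nonneg_left (by linarith [habsa.1]) hLa0.le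
    have i3 : Real.log b * tau s b - Real.log a * tau s a ≤
        (Real.log b - Real.log a) * ℓ + (Real.log b + Real.log a) * δu := by
      have e2 : Real.log b * (ℓ + δu) - Real.log a * (ℓ - δu)
          = (Real.log b - Real.log a) * ℓ + (Real.log b + Real.log a) * δu := by ring
      linarith
    have i4 : (Real.log b + Real.log a) * δu ≤ 2*l*Real.log x * δu := by
      apply mul_le_mul_of_nonneg_right _ hδu.le
      have e3 : q1 * Real.log x ≤ l * Real.log x := mul_le_mul_of_nonneg_right hq1l hG.le
      linarith
    have i5 : 2*l*Real.log x*δu = ε' * ((l - 1)/3 * Real.log x) := by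
      rw [hδudef]
      field_simp
      ring
    have i6 : ε' * ((l - 1)/3 * Real.log x) ≤ ε' * (Real.log b - Real.log a) :=
      mul_le_mul_of_nonneg_left hgapU hε'.le
    have hup : s x ≤ ℓ + 2 * ε' := by
      have htot : (s x - ε') * (Real.log b - Real.log a)
          ≤ (ℓ + ε') * (Real.log b - Real.log a) := by
        have e4 : (ℓ + ε') * (Real.log b - Real.log a)
            = (Real.log b - Real.log a) * ℓ + ε' * (Real.log b - Real.log a) := by ring
        linarith
      have hfin := le_of_mul_le_mul_right htot hgapU0
      linarith
    -- ===== lower bound =====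
    obtain ⟨c, ⟨hc1, hc2⟩, hτc⟩ := hgL1
    obtain ⟨e, ⟨he1, he2⟩, hτe⟩ := hgL2
    rw [Real.rpow_one] at he2
    have hxp1gt1 : 1 < x ^ p1 := Real.one_lt_rpow_iff_of_pos hx0 |>.2 (Or.inl ⟨hx1, hp1⟩)
    have hxc : 1 < c := lt_trans hxp1gt1 hc1
    have hp2p3 : x ^ p2 < x ^ p3 := Real.rpow_lt_rpow_of_exponent_lt hx1 hp23
    have hce : c < e := lt_of_le_of_lt hc2 (lt_of_lt_of_le hp2p3 he1.le)
    have hm' : ∀ t ∈ Ioc c e, s t ≤ s x + ε' := by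
      intro t ht
      have htx : t ≤ x := le_trans ht.2 he2
      rcases eq_or_lt_of_le htx with h | h
      · rw [h]; linarith
      · have htp1 : x ^ p1 < t := lt_trans hc1 ht.1
        have htX : X ≤ t := le_trans hxp1X htp1.le
        have hxtl : x ≤ t ^ l := by
          have h1 : x ^ (p1 * l) ≤ t ^ l := by
            rw [Real.rpow_mul hx0.le]
            exact Real.rpow_le_rpow (by positivity) htp1.le (by linarith)
          have h2 : x ≤ x ^ (p1 * l) := by
            nth_rewrite 1 [← Real.rpow_one x]
            exact Real.rpow_le_rpow_of_exponent_le hx1.le hp1l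
          linarith
        have hfin := hX t htX x ⟨h, hxtl⟩
        linarith
    have hI' := upperBound hs hxc hce hm'
    rw [← diff hs hxc hce.le] at hI'
    have hLc0 : 0 < Real.log c := Real.log_pos hxc
    have hLe0 : 0 < Real.log e := Real.log_pos (lt_trans hxc hce)
    have hLcU : Real.log c ≤ p2 * Real.log x := by
      calc Real.log c ≤ Real.log (x ^ p2) := Real.log_le_log (by linarith) hc2
        _ = p2 * Real.log x := Real.log_rpow hx0 _
    have hLeU : Real.log e ≤ Real.log x := Real.log_le_log (by linarith) he2
    have hLeL : p3 * Real.log x < Real.log e := by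
      calc p3 * Real.log x = Real.log (x ^ p3) := (Real.log_rpow hx0 _).symm
        _ < Real.log e := Real.log_lt_log (by positivity) he1
    have hgapL : d * Real.log x ≤ Real.log e - Real.log c := by
      have e6 : d * Real.log x = p3 * Real.log x - p2 * Real.log x := by
        rw [hp2def, hp3def]; ring
      linarith
    have hgapL0 : 0 < Real.log e - Real.log c :=
      lt_of_lt_of_le (mul_pos hd hG) hgapL
    have habsc := abs_le.1 hτc
    have habse := abs_le.1 hτe
    have j1 : Real.log e * (ℓ - δd) ≤ Real.log e * tau s e :=
      mul_le_mul_of_nonneg_left (by linarith [habse.1]) hLe0.le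
    have j2 : Real.log c * tau s c ≤ Real.log c * (ℓ + δd) :=
      mul_le_mul_of_nonneg_left (by linarith [habsc.2]) hLc0.le
    have j3 : (Real.log e - Real.log c) * ℓ - (Real.log e + Real.log c) * δd ≤
        Real.log e * tau s e - Real.log c * tau s c := by
      have e7 : Real.log e * (ℓ - δd) - Real.log c * (ℓ + δd)
          = (Real.log e - Real.log c) * ℓ - (Real.log e + Real.log c) * δd := by ring
      linarith
    have j4 : (Real.log e + Real.log c) * δd ≤ 2*Real.log x * δd := by
      apply mul_le_mul_of_nonneg_right _ hδd.le
      have e8 : p2 * Real.log x ≤ 1 * Real.log x := mul_le_mul_of_nonneg_right hp21 hG.le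
      linarith
    have j5 : 2*Real.log x*δd = ε' * (d * Real.log x) := by rw [hδddef]; ring
    have j6 : ε' * (d * Real.log x) ≤ ε' * (Real.log e - Real.log c) :=
      mul_le_mul_of_nonneg_left hgapL hε'.le
    have hlow : ℓ - 2 * ε' ≤ s x := by
      have htot : (ℓ - ε') * (Real.log e - Real.log c)
          ≤ (s x + ε') * (Real.log e - Real.log c) := by
        have e9 : (ℓ - ε') * (Real.log e - Real.log c)
            = (Real.log e - Real.log c) * ℓ - ε' * (Real.log e - Real.log c) := by ring
        linarith
      have hfin := le_of_mul_le_mul_right htot hgapL0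
      linarith
    rw [abs_lt]
    rw [hε'def] at hup hlow
    constructor
    · linarith
    · linarith
  obtain ⟨N, hN⟩ := eventually_atTop.1 key
  exact ⟨N, fun n hn => by rw [Real.dist_eq]; exact hN n hn⟩
end

section
/- (Main theorem, two-sided) If s : [1,∞) → ℂ is locally integrable, slowly oscillating with respect to logarithmic summability, and the statistical limit st-lim_{t→∞} τ(t) = ℓ of its logarithmic mean τ(t) := (1/log t)·∫₁ᵗ s(x)/x dx exists, then the ordinary limit lim_{x→∞} s(x) = ℓ exists. -/
open Filter MeasureTheory Set intervalIntegral

lemma so_extract (s : ℝ → ℂ) (hso : SlowlyOscillatingL1 s) {δ : ℝ} (hδ : 0 < δ) :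
    ∃ l : ℝ, 1 < l ∧ ∀ᶠ x in atTop, ∀ t ∈ Set.Ioc x (x ^ l), ‖s t - s x‖ ≤ δ := by
  unfold SlowlyOscillatingL1 at hso
  have h0 : (⨅ l ∈ Set.Ioi (1 : ℝ),
      Filter.limsup (fun x : ℝ =>
        sSup ((fun t : ℝ => ((‖s t - s x‖ : ℝ) : EReal)) '' Set.Ioc x (x ^ l)))
        Filter.atTop) < (δ : EReal) := by
    rw [hso]
    exact_mod_cast EReal.coe_lt_coe_iff.2 hδ
  rw [iInf_lt_iff] at h0
  obtain ⟨l, hl⟩ := h0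
  rw [iInf_lt_iff] at hl
  obtain ⟨hl1, hl2⟩ := hl
  refine ⟨l, hl1, ?_⟩
  have hev := eventually_lt_of_limsup_lt hl2
  filter_upwards [hev] with x hx t ht
  have hmem : ((‖s t - s x‖ : ℝ) : EReal) ∈
      (fun t : ℝ => ((‖s t - s x‖ : ℝ) : EReal)) '' Set.Ioc x (x ^ l) :=
    ⟨t, ht, rfl⟩
  have := (le_sSup hmem).trans_lt hx
  exact le_of_lt (EReal.coe_lt_coe_iff.1 this)

lemma st_extract (τ : ℝ → ℂ) (ℓ : ℂ) (hst : StatLimC τ ℓ) {ε a b : ℝ}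
    (hε : 0 < ε) (ha : 0 < a) (hab : a < b) :
    ∀ᶠ x in Filter.atTop, ∃ t ∈ Set.Ioc (x ^ a) (x ^ b), ‖τ t - ℓ‖ ≤ ε := by
  have hb : 0 < b := ha.trans hab
  have h1 := hst ε hε
  have h2 : ∀ᶠ b' in atTop,
      (volume {x : ℝ | x ∈ Ioo (1 : ℝ) b' ∧ ε < ‖τ x - ℓ‖}).toReal / (b' - 1)
        < 1/2 := by
    have := h1.eventually (eventually_lt_nhds (by norm_num : (0:ℝ) < 1/2))
    exact this
  have h3 : ∀ᶠ x : ℝ in atTop,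
      (volume {t : ℝ | t ∈ Ioo (1 : ℝ) (x ^ b) ∧ ε < ‖τ t - ℓ‖}).toReal
        / (x ^ b - 1) < 1/2 :=
    (tendsto_rpow_atTop hb).eventually h2
  have h4 : ∀ᶠ x : ℝ in atTop, (2:ℝ) < x ^ (b - a) :=
    (tendsto_rpow_atTop (by linarith)).eventually (eventually_gt_atTop 2)
  filter_upwards [h3, h4, eventually_gt_atTop (1:ℝ)] with x hx3 hx4 hx1
  by_contra hcon
  push_neg at hcon
  have hxpos : (0:ℝ) < x := by linarith
  have hxa1 : 1 < x ^ a := (Real.one_lt_rpow_iff_of_pos hxpos).2 (Or.inl ⟨hx1, ha⟩)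
  have hxb1 : 1 < x ^ b := (Real.one_lt_rpow_iff_of_pos hxpos).2 (Or.inl ⟨hx1, hb⟩)
  have hsub : Ioo (x ^ a) (x ^ b) ⊆
      {t : ℝ | t ∈ Ioo (1 : ℝ) (x ^ b) ∧ ε < ‖τ t - ℓ‖} := by
    intro t ht
    refine ⟨⟨hxa1.trans ht.1, ht.2⟩, ?_⟩
    exact hcon t ⟨ht.1, le_of_lt ht.2⟩
  have hvol : volume (Ioo (x ^ a) (x ^ b)) ≤
      volume {t : ℝ | t ∈ Ioo (1 : ℝ) (x ^ b) ∧ ε < ‖τ t - ℓ‖} :=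
    measure_mono hsub
  have hfin : volume {t : ℝ | t ∈ Ioo (1 : ℝ) (x ^ b) ∧ ε < ‖τ t - ℓ‖} ≠ ⊤ := by
    have : {t : ℝ | t ∈ Ioo (1 : ℝ) (x ^ b) ∧ ε < ‖τ t - ℓ‖} ⊆ Ioo 1 (x ^ b) :=
      fun t ht => ht.1
    exact ((measure_mono this).trans_lt (by simp [Real.volume_Ioo])).ne
  have htr : x ^ b - x ^ a ≤
      (volume {t : ℝ | t ∈ Ioo (1 : ℝ) (x ^ b) ∧ ε < ‖τ t - ℓ‖}).toReal := by
    have hnn : (0:ℝ) ≤ x ^ b - x ^ a := by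
      have := Real.rpow_le_rpow_of_exponent_le (le_of_lt hx1) (le_of_lt hab)
      linarith
    have h := ENNReal.toReal_mono hfin hvol
    rwa [Real.volume_Ioo, ENNReal.toReal_ofReal hnn] at h
  have hkey : x ^ b - x ^ a > (x ^ b - 1) / 2 := by
    have hxab : x ^ b = x ^ a * x ^ (b - a) := by
      rw [← Real.rpow_add hxpos]; ring_nf
    have h2a : 2 * x ^ a < x ^ b := by
      rw [hxab]
      have : (0:ℝ) < x ^ a := by positivity
      nlinarith
    linarith
  have hdpos : (0:ℝ) < x ^ b - 1 := by linarith
  have : (volume {t : ℝ | t ∈ Ioo (1 : ℝ) (x ^ b) ∧ ε < ‖τ t - ℓ‖}).toReal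
      / (x ^ b - 1) > 1/2 := by
    rw [gt_iff_lt, lt_div_iff₀ hdpos]
    calc 1/2 * (x ^ b - 1) = (x ^ b - 1)/2 := by ring
    _ < x ^ b - x ^ a := hkey
    _ ≤ _ := htr
  linarith

lemma g_int (s : ℝ → ℂ) (hs : LocallyIntegrableOn s (Ici (1 : ℝ))) {a b : ℝ}
    (ha : 1 ≤ a) (hab : a ≤ b) :
    IntervalIntegrable (fun u : ℝ => s u / (u : ℂ)) volume a b := by
  rw [intervalIntegrable_iff_integrableOn_Ioc_of_le hab]
  have hK : IntegrableOn s (Icc a b) volume :=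
    hs.integrableOn_compact_subset (fun u hu => le_trans ha hu.1) isCompact_Icc
  have hcont : ContinuousOn (fun u : ℝ => ((u : ℂ))⁻¹) (Icc a b) := by
    apply ContinuousOn.inv₀ (Complex.continuous_ofReal.continuousOn)
    intro u hu
    exact_mod_cast Complex.ofReal_ne_zero.2 (by nlinarith [hu.1] : (u:ℝ) ≠ 0)
  have := (hK.mul_continuousOn hcont isCompact_Icc).mono_set Ioc_subset_Icc_self
  simpa [div_eq_mul_inv] using this

set_option maxHeartbeats 1000000 in
theorem stmt18 (s : ℝ → ℂ) (ℓ : ℂ)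
    (hs : LocallyIntegrableOn s (Ici (1 : ℝ)))
    (hso : SlowlyOscillatingL1 s)
    (hst : StatLimC (fun t : ℝ => (Real.log t)⁻¹ • ∫ x in (1 : ℝ)..t, s x / (x : ℂ)) ℓ) :
    Tendsto s atTop (nhds ℓ) := by
  rw [Metric.tendsto_nhds]
  intro ε hε
  set δ : ℝ := ε / 4 with hδdef
  have hδ : 0 < δ := by positivity
  obtain ⟨l, hl1, hso'⟩ := so_extract s hso hδ
  set μ : ℝ := (1 + l) / 2 with hμdef
  have hμ1 : 1 < μ := by simp only [hμdef]; linarith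
  have hμl : μ < l := by simp only [hμdef]; linarith
  have hl0 : (0:ℝ) < l := by linarith
  set ε' : ℝ := δ * (μ - 1) / (l + 1) with hε'def
  have hε' : 0 < ε' := by
    apply div_pos (mul_pos hδ (by linarith)) (by linarith)
  have hE1 := st_extract _ ℓ hst hε' (a := 1/l) (b := 1)
    (by positivity) (by rw [div_lt_one hl0]; exact hl1)
  have hE2 := st_extract _ ℓ hst hε' (a := μ) (b := l) (by linarith) hμl
  rw [eventually_atTop] at hso'
  obtain ⟨X₀, hX₀⟩ := hso'
  have hXl : ∀ᶠ x : ℝ in atTop, X₀ ≤ x ^ (1/l) :=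
    (tendsto_rpow_atTop (by positivity)).eventually (eventually_ge_atTop X₀)
  filter_upwards [hE1, hE2, hXl, eventually_gt_atTop (1:ℝ)] with x h1 h2 hXx hx1
  have hxpos : (0:ℝ) < x := by linarith
  obtain ⟨t₁, ht₁mem, ht₁⟩ := h1
  obtain ⟨t₂, ht₂mem, ht₂⟩ := h2
  rw [Real.rpow_one] at ht₁mem
  -- basic inequalities
  have hx1l : 1 < x ^ (1/l) :=
    (Real.one_lt_rpow_iff_of_pos hxpos).2 (Or.inl ⟨hx1, by positivity⟩)
  have ht₁1 : 1 < t₁ := hx1l.trans ht₁mem.1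
  have ht₁x : t₁ ≤ x := ht₁mem.2
  have hxμ : x < x ^ μ := by
    nth_rewrite 1 [← Real.rpow_one x]
    exact Real.rpow_lt_rpow_of_exponent_lt hx1 hμ1
  have hxt₂ : x < t₂ := hxμ.trans ht₂mem.1
  have ht₁2 : t₁ < t₂ := lt_of_le_of_lt ht₁x hxt₂
  have ht₂pos : (0:ℝ) < t₂ := by linarith
  have ht₁pos : (0:ℝ) < t₁ := by linarith
  have hLx : 0 < (Real.log x) := Real.log_pos hx1
  have hL1 : 0 < (Real.log t₁) := Real.log_pos ht₁1
  have hL1x : (Real.log t₁) ≤ (Real.log x) := Real.log_le_log ht₁pos ht₁x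
  have hL2u : (Real.log t₂) ≤ l * (Real.log x) := by
    have := Real.log_le_log ht₂pos ht₂mem.2
    rwa [Real.log_rpow hxpos] at this
  have hL2l : μ * (Real.log x) < (Real.log t₂) := by
    have := Real.log_lt_log (by positivity) ht₂mem.1
    rwa [Real.log_rpow hxpos] at this
  have hD : (μ - 1) * (Real.log x) < (Real.log t₂) - (Real.log t₁) := by nlinarith
  have hDpos : 0 < (Real.log t₂) - (Real.log t₁) := by nlinarith
  -- slow oscillation at base points x and t₁
  have hXx' : X₀ ≤ x := le_trans hXx (by
    nth_rewrite 2 [← Real.rpow_one x]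
    exact Real.rpow_le_rpow_of_exponent_le (le_of_lt hx1) (by
      rw [div_le_one hl0]; linarith))
  have hsx : ∀ t ∈ Set.Ioc x (x ^ l), ‖s t - s x‖ ≤ δ := hX₀ x hXx'
  have hst₁ : ∀ t ∈ Set.Ioc t₁ (t₁ ^ l), ‖s t - s t₁‖ ≤ δ :=
    hX₀ t₁ (le_trans hXx (le_of_lt ht₁mem.1))
  have hxt₁l : x ≤ t₁ ^ l := by
    have h := Real.rpow_le_rpow (le_of_lt (by positivity : (0:ℝ) < x ^ (1/l)))
      (le_of_lt ht₁mem.1) (le_of_lt hl0)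
    rwa [← Real.rpow_mul (le_of_lt hxpos), one_div,
      inv_mul_cancel₀ (ne_of_gt hl0), Real.rpow_one] at h
  -- pointwise oscillation bound on (t₁, t₂]
  have hbd : ∀ u ∈ Set.Ioc t₁ t₂, ‖s u - s x‖ ≤ 2 * δ := by
    intro u hu
    rcases le_or_gt u x with h | h
    · have ht₁x' : t₁ < x := lt_of_lt_of_le hu.1 h
      have h1 : ‖s u - s t₁‖ ≤ δ := hst₁ u ⟨hu.1, le_trans h hxt₁l⟩
      have h2 : ‖s x - s t₁‖ ≤ δ := hst₁ x ⟨ht₁x', hxt₁l⟩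
      calc ‖s u - s x‖ = ‖(s u - s t₁) - (s x - s t₁)‖ := by ring_nf
      _ ≤ ‖s u - s t₁‖ + ‖s x - s t₁‖ := by
          exact (norm_sub_le _ _)
      _ ≤ 2 * δ := by linarith
    · have := hsx u ⟨h, le_trans hu.2 ht₂mem.2⟩
      linarith
  -- integrability and integral identities
  have hi1 : IntervalIntegrable (fun u : ℝ => s u / (u : ℂ)) volume 1 t₁ :=
    g_int s hs le_rfl (le_of_lt ht₁1)
  have hi2 : IntervalIntegrable (fun u : ℝ => s u / (u : ℂ)) volume t₁ t₂ :=
    g_int s hs (le_of_lt ht₁1) (le_of_lt ht₁2)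
  have hF : (∫ u in (1:ℝ)..t₂, s u / (u : ℂ)) - (∫ u in (1:ℝ)..t₁, s u / (u : ℂ))
      = ∫ u in t₁..t₂, s u / (u : ℂ) := by
    rw [← integral_add_adjacent_intervals hi1 hi2]; ring
  have hinv : (∫ u in t₁..t₂, (u:ℝ)⁻¹) = (Real.log t₂) - (Real.log t₁) := by
    rw [integral_inv_of_pos ht₁pos ht₂pos,
      Real.log_div (ne_of_gt ht₂pos) (ne_of_gt ht₁pos)]
  have hconst : (∫ u in t₁..t₂, ((u:ℝ)⁻¹ • s x)) = ((Real.log t₂) - (Real.log t₁)) • s x := by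
    rw [intervalIntegral.integral_smul_const, hinv]
  have hinvcont : ContinuousOn (fun u : ℝ => (u:ℝ)⁻¹) (Set.uIcc t₁ t₂) := by
    apply ContinuousOn.inv₀ continuousOn_id
    intro u hu
    rw [Set.uIcc_of_le (le_of_lt ht₁2)] at hu
    exact ne_of_gt (lt_of_lt_of_le ht₁pos hu.1)
  have hii_inv : IntervalIntegrable (fun u : ℝ => (u:ℝ)⁻¹) volume t₁ t₂ :=
    hinvcont.intervalIntegrable
  have hii_invsx : IntervalIntegrable (fun u : ℝ => (u:ℝ)⁻¹ • s x) volume t₁ t₂ :=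
    (hinvcont.smul continuousOn_const).intervalIntegrable
  -- Part A
  have hA : ‖(∫ u in t₁..t₂, s u / (u : ℂ)) - ((Real.log t₂) - (Real.log t₁)) • s x‖ ≤ 2 * δ * ((Real.log t₂) - (Real.log t₁)) := by
    rw [← hconst, ← intervalIntegral.integral_sub hi2 hii_invsx]
    have hboundInt : IntervalIntegrable (fun u : ℝ => 2 * δ * u⁻¹) volume t₁ t₂ :=
      hii_inv.const_mul _
    refine le_trans (intervalIntegral.norm_integral_le_of_norm_le (le_of_lt ht₁2) ?_ hboundInt) ?_
    · filter_upwards with u hu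
      have hupos : (0:ℝ) < u := lt_trans ht₁pos hu.1
      have heq : s u / (u : ℂ) - (u:ℝ)⁻¹ • s x = (s u - s x) * ((u : ℂ))⁻¹ := by
        rw [Complex.real_smul, Complex.ofReal_inv, div_eq_mul_inv, sub_mul]
        ring
      rw [heq, norm_mul]
      have h1 : ‖((u : ℂ))⁻¹‖ = u⁻¹ := by
        rw [norm_inv, Complex.norm_real, Real.norm_eq_abs, abs_of_pos hupos]
      rw [h1]
      have := hbd u hu
      have hiu : (0:ℝ) ≤ u⁻¹ := by positivity
      exact mul_le_mul_of_nonneg_right this hiu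
    · have heval : (∫ u in t₁..t₂, 2 * δ * u⁻¹) = 2 * δ * ((Real.log t₂) - (Real.log t₁)) := by
        rw [intervalIntegral.integral_const_mul, hinv]
      rw [heval]
  -- Part B
  have hFt : ∀ t : ℝ, 1 < t → (∫ u in (1:ℝ)..t, s u / (u : ℂ))
      = (Real.log t) • ((Real.log t)⁻¹ • ∫ u in (1:ℝ)..t, s u / (u : ℂ)) := by
    intro t ht
    rw [smul_smul, mul_inv_cancel₀ (ne_of_gt (Real.log_pos ht)), one_smul]
  have hL2 : 0 < (Real.log t₂) := lt_trans (by positivity) hL2l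
  have ht₂1 : 1 < t₂ := lt_trans hx1 hxt₂
  have hB : ‖(∫ u in t₁..t₂, s u / (u : ℂ)) - ((Real.log t₂) - (Real.log t₁)) • ℓ‖ ≤ ε' * ((Real.log t₂) + (Real.log t₁)) := by
    rw [← hF, hFt t₂ ht₂1, hFt t₁ ht₁1]
    have hre : (Real.log t₂) • ((Real.log t₂)⁻¹ • ∫ u in (1:ℝ)..t₂, s u / (u : ℂ))
        - (Real.log t₁) • ((Real.log t₁)⁻¹ • ∫ u in (1:ℝ)..t₁, s u / (u : ℂ)) - ((Real.log t₂) - (Real.log t₁)) • ℓ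
        = (Real.log t₂) • (((Real.log t₂)⁻¹ • ∫ u in (1:ℝ)..t₂, s u / (u : ℂ)) - ℓ)
        - (Real.log t₁) • (((Real.log t₁)⁻¹ • ∫ u in (1:ℝ)..t₁, s u / (u : ℂ)) - ℓ) := by
      rw [sub_smul, smul_sub, smul_sub]; abel
    rw [hre]
    refine le_trans (norm_sub_le _ _) ?_
    rw [norm_smul, norm_smul, Real.norm_eq_abs, Real.norm_eq_abs,
      abs_of_pos hL2, abs_of_pos hL1]
    have n2 : ‖(((Real.log t₂)⁻¹ • ∫ u in (1:ℝ)..t₂, s u / (u : ℂ))) - ℓ‖ ≤ ε' := by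
      exact ht₂
    have n1 : ‖(((Real.log t₁)⁻¹ • ∫ u in (1:ℝ)..t₁, s u / (u : ℂ))) - ℓ‖ ≤ ε' := by
      exact ht₁
    have c2 := mul_le_mul_of_nonneg_left n2 (le_of_lt hL2)
    have c1 := mul_le_mul_of_nonneg_left n1 (le_of_lt hL1)
    calc Real.log t₂ * ‖(((Real.log t₂)⁻¹ • ∫ u in (1:ℝ)..t₂, s u / (u : ℂ))) - ℓ‖
          + Real.log t₁ * ‖(((Real.log t₁)⁻¹ • ∫ u in (1:ℝ)..t₁, s u / (u : ℂ))) - ℓ‖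
        ≤ Real.log t₂ * ε' + Real.log t₁ * ε' := add_le_add c2 c1
      _ = ε' * ((Real.log t₂) + (Real.log t₁)) := by ring
  -- combine
  have hcomb : ‖((Real.log t₂) - (Real.log t₁)) • (s x - ℓ)‖ ≤ 2 * δ * ((Real.log t₂) - (Real.log t₁)) + ε' * ((Real.log t₂) + (Real.log t₁)) := by
    have hsplit : ((Real.log t₂) - (Real.log t₁)) • (s x - ℓ)
        = (((Real.log t₂) - (Real.log t₁)) • s x - ∫ u in t₁..t₂, s u / (u : ℂ))
          + ((∫ u in t₁..t₂, s u / (u : ℂ)) - ((Real.log t₂) - (Real.log t₁)) • ℓ) := by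
      rw [smul_sub]; abel
    rw [hsplit]
    refine le_trans (norm_add_le _ _) ?_
    rw [norm_sub_rev]
    linarith [hA, hB]
  have hε'b : ε' * ((Real.log t₂) + (Real.log t₁)) ≤ δ * ((Real.log t₂) - (Real.log t₁)) := by
    have e1 : (Real.log t₂) + (Real.log t₁) ≤ (l + 1) * (Real.log x) := by nlinarith
    have e2 : ε' * ((Real.log t₂) + (Real.log t₁)) ≤ ε' * ((l + 1) * (Real.log x)) :=
      mul_le_mul_of_nonneg_left e1 (le_of_lt hε')
    have e3 : ε' * ((l + 1) * (Real.log x)) = δ * (μ - 1) * (Real.log x) := by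
      rw [hε'def]; field_simp
    have e4 : δ * (μ - 1) * (Real.log x) ≤ δ * ((Real.log t₂) - (Real.log t₁)) := by nlinarith [hD]
    linarith
  have hnorm : ‖((Real.log t₂) - (Real.log t₁)) • (s x - ℓ)‖ = ((Real.log t₂) - (Real.log t₁)) * ‖s x - ℓ‖ := by
    rw [norm_smul, Real.norm_eq_abs, abs_of_pos hDpos]
  have hfin2 : ‖s x - ℓ‖ ≤ 3 * δ := by
    have h3 : ((Real.log t₂) - (Real.log t₁)) * ‖s x - ℓ‖ ≤ (3 * δ) * ((Real.log t₂) - (Real.log t₁)) := by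
      rw [← hnorm]; linarith [hcomb, hε'b]
    nlinarith [hDpos, h3]
  rw [Complex.dist_eq]
  calc ‖s x - ℓ‖ = ‖s x - ℓ‖ := rfl
  _ ≤ 3 * δ := hfin2
  _ < ε := by rw [hδdef]; linarith
end
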